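/- arXiv:1509.05928 — 4 statements merged into one kernel-verified Lean document; each statement's English description precedes it below -/
import Mathlib

section
/- Let n ≥ 1, α > 0, r ∈ ℝ, and let g ∈ L²(ℝⁿ) be measurable with P_r(g)₋ > 0. Then there exists a constant C₁ > 0 such that for all t ≥ 0: ∫_{ℝⁿ} e^{−2t|ξ|^{2α}} |g(ξ)|² dξ ≥ C₁ (1+t)^{−(r+n/2)/α}. -/
open MeasureTheory Filter Topology
open scoped ENNReal NNReal

noncomputable section

/-- The quantity `ρ^{-(2r+n)} ∫_{|ξ|≤ρ} |g(ξ)|² dξ`, valued in `[0,∞]`. -/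
def decayFun (n : ℕ) (g : EuclideanSpace ℝ (Fin n) → ℂ) (r ρ : ℝ) : ℝ≥0∞ :=
  ENNReal.ofReal (ρ ^ (-(2 * r + (n : ℝ)))) *
    ∫⁻ ξ in {ξ : EuclideanSpace ℝ (Fin n) | ‖ξ‖ ≤ ρ}, ENNReal.ofReal (‖g ξ‖ ^ 2)

/-- Lower decay indicator `P_r(g)₋`. -/
def Pminus (n : ℕ) (g : EuclideanSpace ℝ (Fin n) → ℂ) (r : ℝ) : ℝ≥0∞ :=
  liminf (fun ρ : ℝ => decayFun n g r ρ) (𝓝[>] (0 : ℝ))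

/-- Upper decay indicator `P_r(g)₊`. -/
def Pplus (n : ℕ) (g : EuclideanSpace ℝ (Fin n) → ℂ) (r : ℝ) : ℝ≥0∞ :=
  limsup (fun ρ : ℝ => decayFun n g r ρ) (𝓝[>] (0 : ℝ))

/-- `E_α(t) = ∫_{ℝⁿ} e^{−2t|ξ|^{2α}} |g(ξ)|² dξ`, valued in `[0,∞]`. -/
def Ealpha (n : ℕ) (g : EuclideanSpace ℝ (Fin n) → ℂ) (α t : ℝ) : ℝ≥0∞ :=
  ∫⁻ ξ : EuclideanSpace ℝ (Fin n),
    ENNReal.ofReal (Real.exp (-(2 * t) * ‖ξ‖ ^ (2 * α)) * ‖g ξ‖ ^ 2)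

theorem stmt3 (n : ℕ) (hn : 1 ≤ n) (α : ℝ) (hα : 0 < α) (r : ℝ)
    (g : EuclideanSpace ℝ (Fin n) → ℂ)
    (hg_meas : Measurable g) (hg : MemLp g 2 (volume : Measure (EuclideanSpace ℝ (Fin n))))
    (hPm : 0 < Pminus n g r) :
    ∃ C₁ : ℝ, 0 < C₁ ∧ ∀ t : ℝ, 0 ≤ t →
      ENNReal.ofReal (C₁ * (1 + t) ^ (-(r + (n : ℝ) / 2) / α)) ≤ Ealpha n g α t := by
  obtain ⟨c, hc0, hclt⟩ := exists_between hPm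
  have hcne : c ≠ ⊤ := (hclt.trans_le le_top).ne
  have hctr : 0 < c.toReal := ENNReal.toReal_pos hc0.ne' hcne
  have hev : ∀ᶠ ρ in 𝓝[>] (0:ℝ), c < decayFun n g r ρ :=
    eventually_lt_of_lt_liminf hclt
  rw [eventually_nhdsWithin_iff] at hev
  obtain ⟨δ, hδ0, hδ⟩ := Metric.eventually_nhds_iff.mp hev
  set δ' : ℝ := min (δ / 2) 1 with hδ'def
  have hδ'0 : 0 < δ' := lt_min (by linarith) one_pos
  have hδ'1 : δ' ≤ 1 := min_le_right _ _
  have hδ'δ : δ' < δ := lt_of_le_of_lt (min_le_left _ _) (by linarith)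
  refine ⟨Real.exp (-2) * c.toReal * δ' ^ (2 * r + (n : ℝ)), by positivity, ?_⟩
  intro t ht
  have h1t : (1:ℝ) ≤ 1 + t := by linarith
  have h1t0 : (0:ℝ) < 1 + t := by linarith
  set ρ : ℝ := δ' * (1 + t) ^ (-(1 / (2 * α))) with hρdef
  have hpow_pos : 0 < (1 + t) ^ (-(1 / (2 * α))) := Real.rpow_pos_of_pos h1t0 _
  have hpow_le1 : (1 + t) ^ (-(1 / (2 * α))) ≤ 1 := by
    apply Real.rpow_le_one_of_one_le_of_nonpos h1t
    have : 0 < 1 / (2 * α) := by positivity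
    linarith
  have hρ0 : 0 < ρ := mul_pos hδ'0 hpow_pos
  have hρδ' : ρ ≤ δ' := by
    calc ρ ≤ δ' * 1 := mul_le_mul_of_nonneg_left hpow_le1 hδ'0.le
    _ = δ' := mul_one _
  have hρδ : ρ < δ := hρδ'.trans_lt hδ'δ
  have hc' : c < decayFun n g r ρ :=
    hδ (by simpa [Real.dist_eq, abs_of_pos hρ0] using hρδ) hρ0
  set A : ℝ := ρ ^ (2 * r + (n : ℝ)) with hAdef
  have hA0 : 0 < A := Real.rpow_pos_of_pos hρ0 _
  set s : Set (EuclideanSpace ℝ (Fin n)) := {ξ | ‖ξ‖ ≤ ρ} with hsdef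
  set I := ∫⁻ ξ in s, ENNReal.ofReal (‖g ξ‖ ^ 2) with hIdef
  have hs : MeasurableSet s := (isClosed_le continuous_norm continuous_const).measurableSet
  have hAne0 : ENNReal.ofReal A ≠ 0 := (ENNReal.ofReal_pos.mpr hA0).ne'
  have hAnetop : ENNReal.ofReal A ≠ ⊤ := ENNReal.ofReal_ne_top
  have hI : ENNReal.ofReal (c.toReal * A) ≤ I := by
    have h1 : c ≤ (ENNReal.ofReal A)⁻¹ * I := by
      have hre : ENNReal.ofReal (ρ ^ (-(2 * r + (n : ℝ)))) = (ENNReal.ofReal A)⁻¹ := by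
        rw [Real.rpow_neg hρ0.le, ENNReal.ofReal_inv_of_pos (Real.rpow_pos_of_pos hρ0 _)]
      calc c ≤ decayFun n g r ρ := hc'.le
        _ = (ENNReal.ofReal A)⁻¹ * I := by rw [decayFun, hre]
    calc ENNReal.ofReal (c.toReal * A)
        = c * ENNReal.ofReal A := by
          rw [ENNReal.ofReal_mul ENNReal.toReal_nonneg, ENNReal.ofReal_toReal hcne]
      _ ≤ ((ENNReal.ofReal A)⁻¹ * I) * ENNReal.ofReal A := mul_le_mul_left h1 _
      _ = I := by
          rw [mul_comm ((ENNReal.ofReal A)⁻¹) I, mul_assoc,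
            ENNReal.inv_mul_cancel hAne0 hAnetop, mul_one]
  have hρ2α : ρ ^ (2 * α) = δ' ^ (2 * α) * (1 + t)⁻¹ := by
    rw [hρdef, Real.mul_rpow hδ'0.le hpow_pos.le, ← Real.rpow_mul h1t0.le]
    congr 1
    rw [← Real.rpow_neg_one (1 + t)]
    congr 1
    field_simp
  have htρ : t * ρ ^ (2 * α) ≤ 1 := by
    have hd1 : δ' ^ (2 * α) ≤ 1 := Real.rpow_le_one hδ'0.le hδ'1 (by positivity)
    rw [hρ2α]
    have h2 : t * (δ' ^ (2 * α) * (1 + t)⁻¹) ≤ t * (1 * (1 + t)⁻¹) := by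
      apply mul_le_mul_of_nonneg_left _ ht
      apply mul_le_mul_of_nonneg_right hd1 (by positivity)
    have h3 : t * (1 * (1 + t)⁻¹) ≤ 1 := by
      rw [one_mul, ← div_eq_mul_inv]
      rw [div_le_one h1t0]
      linarith
    linarith
  have hexp : ∀ ξ : EuclideanSpace ℝ (Fin n), ξ ∈ s →
      Real.exp (-2) * ‖g ξ‖ ^ 2 ≤ Real.exp (-(2 * t) * ‖ξ‖ ^ (2 * α)) * ‖g ξ‖ ^ 2 := by
    intro ξ hξ
    apply mul_le_mul_of_nonneg_right _ (by positivity)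
    apply Real.exp_le_exp.mpr
    have hnn : ‖ξ‖ ^ (2 * α) ≤ ρ ^ (2 * α) :=
      Real.rpow_le_rpow (norm_nonneg _) hξ (by positivity)
    have hpos : 0 ≤ ‖ξ‖ ^ (2 * α) := Real.rpow_nonneg (norm_nonneg _) _
    nlinarith [mul_le_mul_of_nonneg_left hnn ht]
  have hAeq : A = δ' ^ (2 * r + (n : ℝ)) * (1 + t) ^ (-(r + (n : ℝ) / 2) / α) := by
    rw [hAdef, hρdef, Real.mul_rpow hδ'0.le hpow_pos.le, ← Real.rpow_mul h1t0.le]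
    congr 2
    field_simp
  calc ENNReal.ofReal (Real.exp (-2) * c.toReal * δ' ^ (2 * r + (n : ℝ)) *
          (1 + t) ^ (-(r + (n : ℝ) / 2) / α))
      = ENNReal.ofReal (Real.exp (-2)) * ENNReal.ofReal (c.toReal * A) := by
        rw [← ENNReal.ofReal_mul (Real.exp_nonneg _)]
        congr 1
        rw [hAeq]; ring
    _ ≤ ENNReal.ofReal (Real.exp (-2)) * I := mul_le_mul_right hI _
    _ = ∫⁻ ξ in s, ENNReal.ofReal (Real.exp (-2)) * ENNReal.ofReal (‖g ξ‖ ^ 2) :=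
        (lintegral_const_mul' _ _ ENNReal.ofReal_ne_top).symm
    _ = ∫⁻ ξ in s, ENNReal.ofReal (Real.exp (-2) * ‖g ξ‖ ^ 2) := by
        simp_rw [← ENNReal.ofReal_mul (Real.exp_nonneg _)]
    _ ≤ ∫⁻ ξ in s, ENNReal.ofReal (Real.exp (-(2 * t) * ‖ξ‖ ^ (2 * α)) * ‖g ξ‖ ^ 2) := by
        apply setLIntegral_mono' hs
        intro ξ hξ
        exact ENNReal.ofReal_le_ofReal (hexp ξ hξ)
    _ ≤ Ealpha n g α t := setLIntegral_le_lintegral _ _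
end
end

section
/- Let n ≥ 1, α > 0, r ∈ ℝ, and let g ∈ L²(ℝⁿ) be measurable with P_r(g)₊ < ∞. Then there exists a constant C₂ > 0 such that for all t ≥ 0: ∫_{ℝⁿ} e^{−2t|ξ|^{2α}} |g(ξ)|² dξ ≤ C₂ (1+t)^{−(r+n/2)/α}. -/
open MeasureTheory Filter Topology
open scoped ENNReal NNReal

noncomputable section

/-- auxiliary: `e^{-x} ≤ C x^{-N}` for `x > 0`. -/
lemma exp_le_aux (N : ℝ) (hN : 0 ≤ N) :
    ∃ C : ℝ, 0 < C ∧ ∀ x : ℝ, 0 < x → Real.exp (-x) ≤ C * x ^ (-N) := by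
  obtain ⟨m, hm⟩ : ∃ m : ℕ, N ≤ m := exists_nat_ge N
  refine ⟨m.factorial, by positivity, fun x hx => ?_⟩
  rcases le_or_gt x 1 with h1 | h1
  · have h2 : (1:ℝ) ≤ x ^ (-N) :=
      Real.one_le_rpow_of_pos_of_le_one_of_nonpos hx h1 (by linarith)
    have h3 : Real.exp (-x) ≤ 1 := Real.exp_le_one_iff.mpr (by linarith)
    have h4 : (1:ℝ) ≤ m.factorial := by exact_mod_cast m.factorial_pos
    nlinarith
  · have hxm : x ^ m / m.factorial ≤ Real.exp x := by
      calc x ^ m / m.factorial ≤ ∑ i ∈ Finset.range (m+1), x ^ i / i.factorial :=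
            Finset.single_le_sum (f := fun i => x ^ i / (i.factorial:ℝ))
              (fun i _ => by positivity) (Finset.self_mem_range_succ m)
        _ ≤ Real.exp x := Real.sum_le_exp_of_nonneg (by linarith) _
    have hxm' : Real.exp (-x) ≤ m.factorial / x ^ m := by
      rw [Real.exp_neg]
      have hp : (0:ℝ) < x ^ m / m.factorial := by positivity
      calc (Real.exp x)⁻¹ ≤ (x ^ m / m.factorial)⁻¹ := inv_anti₀ hp hxm
        _ = m.factorial / x ^ m := by rw [inv_div]
    have h5 : (m.factorial:ℝ) / x ^ m = m.factorial * x ^ (-(m:ℝ)) := by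
      rw [Real.rpow_neg (by positivity), Real.rpow_natCast]; ring
    have h6 : x ^ (-(m:ℝ)) ≤ x ^ (-N) :=
      Real.rpow_le_rpow_of_exponent_le h1.le (by linarith)
    calc Real.exp (-x) ≤ m.factorial / x ^ m := hxm'
      _ = m.factorial * x ^ (-(m:ℝ)) := h5
      _ ≤ m.factorial * x ^ (-N) := by
          have : (0:ℝ) ≤ m.factorial := by positivity
          nlinarith

/-- auxiliary scalar identity for the dyadic shell estimate. -/
lemma shell_scalar (C t ρ α N e : ℝ) (ht : 0 < t) (hρ : 0 < ρ) (k : ℕ) :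
    C * (2 * t * ((2 ^ k * ρ) ^ (2 * α))) ^ (-N) * ((2 ^ (k + 1) * ρ) ^ e)
      = C * (2:ℝ) ^ e * ((2 * t) ^ (-N) * ρ ^ (e - 2 * α * N)) * ((2:ℝ) ^ (e - 2 * α * N)) ^ k := by
  have h2k : (0:ℝ) < 2 ^ k := by positivity
  have l1 : (2 * t * ((2 ^ k * ρ) ^ (2 * α))) ^ (-N)
      = Real.exp ((Real.log 2 + Real.log t + 2 * α * (k * Real.log 2 + Real.log ρ)) * (-N)) := by
    rw [Real.rpow_def_of_pos (by positivity), Real.log_mul (by positivity) (by positivity),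
      Real.log_mul two_ne_zero ht.ne', Real.log_rpow (by positivity),
      Real.log_mul h2k.ne' hρ.ne', Real.log_pow, Real.exp_eq_exp]
  have l2 : ((2:ℝ) ^ (k+1) * ρ) ^ e = Real.exp ((((k:ℝ)+1) * Real.log 2 + Real.log ρ) * e) := by
    rw [Real.rpow_def_of_pos (by positivity), Real.log_mul (by positivity) hρ.ne',
      Real.log_pow, Real.exp_eq_exp]
    push_cast; ring
  have l3 : (2:ℝ) ^ e = Real.exp (Real.log 2 * e) := Real.rpow_def_of_pos two_pos e
  have l4 : (2 * t) ^ (-N) = Real.exp ((Real.log 2 + Real.log t) * (-N)) := by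
    rw [Real.rpow_def_of_pos (by positivity), Real.log_mul two_ne_zero ht.ne']
  have l5 : ρ ^ (e - 2 * α * N) = Real.exp (Real.log ρ * (e - 2 * α * N)) :=
    Real.rpow_def_of_pos hρ _
  have l6 : ((2:ℝ) ^ (e - 2 * α * N)) ^ k = Real.exp ((e - 2 * α * N) * Real.log 2 * k) := by
    rw [← Real.rpow_natCast ((2:ℝ) ^ (e - 2 * α * N)) k, ← Real.rpow_mul (by norm_num),
      Real.rpow_def_of_pos two_pos, Real.exp_eq_exp]
    ring
  rw [l1, l2, l3, l4, l5, l6]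
  simp only [mul_assoc, ← Real.exp_add]
  congr 1
  rw [Real.exp_eq_exp]
  ring

set_option maxHeartbeats 3200000 in
theorem stmt4 (n : ℕ) (hn : 1 ≤ n) (α : ℝ) (hα : 0 < α) (r : ℝ)
    (g : EuclideanSpace ℝ (Fin n) → ℂ)
    (hg_meas : Measurable g) (hg : MemLp g 2 (volume : Measure (EuclideanSpace ℝ (Fin n))))
    (hPp : Pplus n g r < ⊤) :
    ∃ C₂ : ℝ, 0 < C₂ ∧ ∀ t : ℝ, 0 ≤ t →
      Ealpha n g α t ≤ ENNReal.ofReal (C₂ * (1 + t) ^ (-(r + (n : ℝ) / 2) / α)) := by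
  classical
  set G : EuclideanSpace ℝ (Fin n) → ℝ≥0∞ := fun ξ => ENNReal.ofReal (‖g ξ‖ ^ 2) with hGdef
  set A := ∫⁻ ξ, G ξ with hAdef
  have hA : A < ⊤ := by
    have h := lintegral_rpow_enorm_lt_top_of_eLpNorm_lt_top (f := g) two_ne_zero
      ENNReal.ofNat_ne_top hg.2
    have heq : ∀ ξ, G ξ = (‖g ξ‖₊ : ℝ≥0∞) ^ ((2:ℝ≥0∞)).toReal := by
      intro ξ
      simp only [hGdef]
      rw [ENNReal.toReal_ofNat, ENNReal.ofReal_pow (norm_nonneg _), ofReal_norm, enorm_eq_nnnorm,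
        show ((2:ℝ)) = ((2:ℕ):ℝ) by norm_num, ENNReal.rpow_natCast]
    rw [hAdef, lintegral_congr heq]
    exact h
  set e := 2 * r + (n:ℝ) with he
  set β := e / (2 * α) with hβ
  have hexp : -(r + (n:ℝ)/2)/α = -β := by
    rw [hβ, he]; field_simp
  set F : ℝ → ℝ≥0∞ := fun s => ∫⁻ ξ in {ξ : EuclideanSpace ℝ (Fin n) | ‖ξ‖ ≤ s}, G ξ
    with hFdef
  have hFA : ∀ s, F s ≤ A := fun s => setLIntegral_le_lintegral _ _
  -- pointwise the integrand of Ealpha is at most G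
  have hpt : ∀ (t : ℝ), 0 ≤ t → ∀ ξ : EuclideanSpace ℝ (Fin n),
      ENNReal.ofReal (Real.exp (-(2 * t) * ‖ξ‖ ^ (2 * α)) * ‖g ξ‖ ^ 2) ≤ G ξ := by
    intro t ht ξ
    apply ENNReal.ofReal_le_ofReal
    have h1 : Real.exp (-(2 * t) * ‖ξ‖ ^ (2 * α)) ≤ 1 := by
      apply Real.exp_le_one_iff.mpr
      have := Real.rpow_nonneg (norm_nonneg ξ) (2 * α)
      nlinarith
    nlinarith [sq_nonneg ‖g ξ‖, Real.exp_pos (-(2 * t) * ‖ξ‖ ^ (2 * α))]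
  have hEA : ∀ t : ℝ, 0 ≤ t → Ealpha n g α t ≤ A := by
    intro t ht
    exact lintegral_mono (hpt t ht)
  -- extract the bound near zero
  set B := Pplus n g r + 1 with hBdef
  have hBfin : B ≠ ⊤ := by
    rw [hBdef]
    exact ENNReal.add_ne_top.mpr ⟨hPp.ne, ENNReal.one_ne_top⟩
  obtain ⟨ρ₀, hρ₀, hB⟩ : ∃ ρ₀ : ℝ, 0 < ρ₀ ∧ ∀ ρ ∈ Set.Ioo (0:ℝ) ρ₀,
      decayFun n g r ρ < B := by
    have hlt : Pplus n g r < B := ENNReal.lt_add_right hPp.ne one_ne_zero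
    have hev : ∀ᶠ ρ in 𝓝[>] (0:ℝ), decayFun n g r ρ < B :=
      eventually_lt_of_limsup_lt hlt
    rw [eventually_iff, mem_nhdsGT_iff_exists_Ioo_subset] at hev
    obtain ⟨u, hu, hsub⟩ := hev
    exact ⟨u, hu, fun ρ hρ => hsub hρ⟩
  have hFB : ∀ ρ ∈ Set.Ioo (0:ℝ) ρ₀, F ρ ≤ B * ENNReal.ofReal (ρ ^ e) := by
    intro ρ hρ
    have h1 : ENNReal.ofReal (ρ ^ (-e)) * F ρ ≤ B := (hB ρ hρ).le
    have hone : ENNReal.ofReal (ρ ^ e) * ENNReal.ofReal (ρ ^ (-e)) = 1 := by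
      rw [← ENNReal.ofReal_mul (Real.rpow_nonneg hρ.1.le _), ← Real.rpow_add hρ.1]
      norm_num
    calc F ρ = ENNReal.ofReal (ρ ^ e) * ENNReal.ofReal (ρ ^ (-e)) * F ρ := by
          rw [hone, one_mul]
      _ = ENNReal.ofReal (ρ ^ e) * (ENNReal.ofReal (ρ ^ (-e)) * F ρ) := by
          rw [mul_assoc]
      _ ≤ ENNReal.ofReal (ρ ^ e) * B := mul_le_mul_right h1 _
      _ = B * ENNReal.ofReal (ρ ^ e) := mul_comm _ _
  -- the two cases
  rcases le_or_gt e 0 with hcase | hcase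
  · -- easy case : the exponent in the goal is nonnegative
    refine ⟨A.toReal + 1, by positivity, fun t ht => ?_⟩
    have hθ : 0 ≤ -(r + (n:ℝ)/2)/α := by
      rw [hexp, hβ]
      have : e / (2*α) ≤ 0 := by
        apply div_nonpos_of_nonpos_of_nonneg hcase; linarith
      linarith
    have h1 : (1:ℝ) ≤ (1 + t) ^ (-(r + (n:ℝ)/2)/α) :=
      Real.one_le_rpow (by linarith) hθ
    calc Ealpha n g α t ≤ A := hEA t ht
      _ = ENNReal.ofReal A.toReal := (ENNReal.ofReal_toReal hA.ne).symm
      _ ≤ ENNReal.ofReal ((A.toReal + 1) * (1 + t) ^ (-(r + (n:ℝ)/2)/α)) := by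
          apply ENNReal.ofReal_le_ofReal
          nlinarith [ENNReal.toReal_nonneg (a := A)]
  · -- main case : e > 0, hence β > 0
    have hβpos : 0 < β := by rw [hβ]; positivity
    set N := β + 1 with hNdef
    have hNpos : 0 < N := by linarith
    obtain ⟨C, hC, hCx⟩ := exp_le_aux N hNpos.le
    set q := (2:ℝ) ^ (e - 2 * α * N) with hqdef
    have hαβ : 2 * α * β = e := by rw [hβ]; field_simp
    have hq1 : q < 1 := by
      apply Real.rpow_lt_one_of_one_lt_of_neg one_lt_two
      nlinarith
    have hq0 : 0 ≤ q := Real.rpow_nonneg (by norm_num) _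
    set B' := B + A * ENNReal.ofReal (ρ₀ ^ (-e)) with hB'def
    have hB'fin : B' ≠ ⊤ := by
      rw [hB'def]
      exact ENNReal.add_ne_top.mpr ⟨hBfin, ENNReal.mul_ne_top hA.ne ENNReal.ofReal_ne_top⟩
    have hF' : ∀ s : ℝ, 0 < s → F s ≤ B' * ENNReal.ofReal (s ^ e) := by
      intro s hs
      rcases lt_or_ge s ρ₀ with h | h
      · exact le_trans (hFB s ⟨hs, h⟩) (mul_le_mul_left le_self_add _)
      · have hone : ENNReal.ofReal (ρ₀ ^ (-e)) * ENNReal.ofReal (ρ₀ ^ e) = 1 := by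
          rw [← ENNReal.ofReal_mul (Real.rpow_nonneg hρ₀.le _), ← Real.rpow_add hρ₀]
          norm_num
        calc F s ≤ A := hFA s
          _ = A * (ENNReal.ofReal (ρ₀ ^ (-e)) * ENNReal.ofReal (ρ₀ ^ e)) := by
              rw [hone, mul_one]
          _ = A * ENNReal.ofReal (ρ₀ ^ (-e)) * ENNReal.ofReal (ρ₀ ^ e) := by
              rw [mul_assoc]
          _ ≤ A * ENNReal.ofReal (ρ₀ ^ (-e)) * ENNReal.ofReal (s ^ e) := by
              apply mul_le_mul_right
              exact ENNReal.ofReal_le_ofReal (Real.rpow_le_rpow hρ₀.le h hcase.le)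
          _ ≤ B' * ENNReal.ofReal (s ^ e) := mul_le_mul_left le_add_self _
    set T := max 1 (ρ₀ ^ (-(2 * α))) with hTdef
    have hT1 : (1:ℝ) ≤ T := le_max_left _ _
    set K := ENNReal.ofReal (C * 2 ^ e) * (1 - ENNReal.ofReal q)⁻¹ with hKdef
    have hKfin : K ≠ ⊤ := by
      apply ENNReal.mul_ne_top ENNReal.ofReal_ne_top
      rw [ENNReal.inv_ne_top]
      have : ENNReal.ofReal q < 1 := ENNReal.ofReal_lt_one.mpr hq1
      exact (tsub_pos_of_lt this).ne'
    set D := B' + B' * K with hDdef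
    have hDfin : D ≠ ⊤ :=
      ENNReal.add_ne_top.mpr ⟨hB'fin, ENNReal.mul_ne_top hB'fin hKfin⟩
    -- the main estimate for t > T
    have hmain : ∀ t : ℝ, T < t → Ealpha n g α t ≤ D * ENNReal.ofReal ((1 + t) ^ (-β)) := by
      intro t ht
      have ht1 : (1:ℝ) ≤ t := le_trans hT1 ht.le
      have ht0 : (0:ℝ) < t := by linarith
      have h1t : (0:ℝ) < 1 + t := by linarith
      set ρ := (1 + t) ^ (-(2 * α)⁻¹) with hρdef
      have hρpos : 0 < ρ := Real.rpow_pos_of_pos h1t _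
      have hρρ₀ : ρ < ρ₀ := by
        have h2 : ρ₀ ^ (-(2*α)) < 1 + t := by
          have := le_max_right 1 (ρ₀ ^ (-(2 * α)))
          calc ρ₀ ^ (-(2*α)) ≤ T := this
            _ < t := ht
            _ < 1 + t := by linarith
        have h3 : (1 + t) ^ (-(2*α)⁻¹) < (ρ₀ ^ (-(2*α))) ^ (-(2*α)⁻¹) := by
          apply Real.rpow_lt_rpow_of_neg (Real.rpow_pos_of_pos hρ₀ _) h2
          rw [neg_lt, neg_zero]
          positivity
        have h4 : (ρ₀ ^ (-(2*α))) ^ (-(2*α)⁻¹) = ρ₀ := by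
          rw [← Real.rpow_mul hρ₀.le]
          rw [show (-(2*α)) * (-(2*α)⁻¹) = 1 by field_simp]
          exact Real.rpow_one ρ₀
        rw [hρdef]
        rw [h4] at h3
        exact h3
      -- ρ ^ e = (1+t) ^ (-β)
      have hρe : ρ ^ e = (1 + t) ^ (-β) := by
        rw [hρdef, ← Real.rpow_mul h1t.le]
        congr 1
        rw [hβ]; field_simp
      set f : EuclideanSpace ℝ (Fin n) → ℝ≥0∞ :=
        fun ξ => ENNReal.ofReal (Real.exp (-(2 * t) * ‖ξ‖ ^ (2 * α)) * ‖g ξ‖ ^ 2) with hfdef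
      have hEf : Ealpha n g α t = ∫⁻ ξ, f ξ := rfl
      have hfG : ∀ ξ, f ξ ≤ G ξ := hpt t ht0.le
      -- shells
      set S : ℕ → Set (EuclideanSpace ℝ (Fin n)) :=
        fun k => {ξ | 2 ^ k * ρ ≤ ‖ξ‖ ∧ ‖ξ‖ ≤ 2 ^ (k + 1) * ρ} with hSdef
      have hcover : {ξ : EuclideanSpace ℝ (Fin n) | ‖ξ‖ ≤ ρ} ∪ ⋃ k, S k = Set.univ := by
        apply Set.eq_univ_of_forall
        intro ξ
        rcases le_or_gt ‖ξ‖ ρ with h | h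
        · exact Or.inl h
        · right
          rw [Set.mem_iUnion]
          set x := ‖ξ‖ / ρ with hxdef
          have hx1 : 1 < x := (one_lt_div hρpos).mpr h
          have hx0 : 0 < x := by linarith
          set k := ⌊Real.logb 2 x⌋₊ with hkdef
          have hlogb : 0 ≤ Real.logb 2 x := Real.logb_nonneg one_lt_two hx1.le
          have h2k : (2:ℝ) ^ k ≤ x := by
            have h5 : (2:ℝ) ^ (k:ℝ) ≤ (2:ℝ) ^ Real.logb 2 x :=
              Real.rpow_le_rpow_of_exponent_le one_le_two (Nat.floor_le hlogb)
            rw [Real.rpow_logb two_pos (by norm_num) hx0] at h5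
            rwa [Real.rpow_natCast] at h5
          have hk2 : x ≤ (2:ℝ) ^ (k + 1) := by
            have h5 : Real.logb 2 x < (k:ℝ) + 1 := Nat.lt_floor_add_one _
            have h6 : (2:ℝ) ^ Real.logb 2 x ≤ (2:ℝ) ^ ((k:ℝ) + 1) :=
              Real.rpow_le_rpow_of_exponent_le one_le_two h5.le
            rw [Real.rpow_logb two_pos (by norm_num) hx0] at h6
            calc x ≤ (2:ℝ) ^ ((k:ℝ) + 1) := h6
              _ = (2:ℝ) ^ (k + 1) := by
                  rw [← Real.rpow_natCast 2 (k+1)]; push_cast; ring_nf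
          refine ⟨k, ?_, ?_⟩
          · exact (le_div_iff₀ hρpos).mp h2k
          · exact (div_le_iff₀ hρpos).mp hk2
      -- decompose the integral
      have hsplit : Ealpha n g α t ≤
          (∫⁻ ξ in {ξ : EuclideanSpace ℝ (Fin n) | ‖ξ‖ ≤ ρ}, f ξ) +
          ∑' k, ∫⁻ ξ in S k, f ξ := by
        calc Ealpha n g α t
            = ∫⁻ ξ in ({ξ : EuclideanSpace ℝ (Fin n) | ‖ξ‖ ≤ ρ} ∪ ⋃ k, S k), f ξ := by
              rw [hcover, setLIntegral_univ, hEf]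
          _ ≤ (∫⁻ ξ in {ξ : EuclideanSpace ℝ (Fin n) | ‖ξ‖ ≤ ρ}, f ξ) +
              ∫⁻ ξ in ⋃ k, S k, f ξ := lintegral_union_le _ _ _
          _ ≤ _ := by
              gcongr
              exact lintegral_iUnion_le _ _
      -- ball piece
      have hball : (∫⁻ ξ in {ξ : EuclideanSpace ℝ (Fin n) | ‖ξ‖ ≤ ρ}, f ξ)
          ≤ B' * ENNReal.ofReal ((1 + t) ^ (-β)) := by
        calc (∫⁻ ξ in {ξ : EuclideanSpace ℝ (Fin n) | ‖ξ‖ ≤ ρ}, f ξ)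
            ≤ F ρ := lintegral_mono hfG
          _ ≤ B' * ENNReal.ofReal (ρ ^ e) := hF' ρ hρpos
          _ = B' * ENNReal.ofReal ((1 + t) ^ (-β)) := by rw [hρe]
      -- shell pieces
      have hshell : ∀ k : ℕ, (∫⁻ ξ in S k, f ξ)
          ≤ B' * ENNReal.ofReal (C * 2 ^ e * ((2 * t) ^ (-N) * ρ ^ (e - 2 * α * N))) *
            ENNReal.ofReal (q ^ k) := by
        intro k
        set X := 2 * t * ((2 ^ k * ρ) ^ (2 * α)) with hXdef
        have hXpos : 0 < X := by
          rw [hXdef]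
          have : (0:ℝ) < (2 ^ k * ρ) ^ (2 * α) := Real.rpow_pos_of_pos (by positivity) _
          positivity
        have hptS : ∀ ξ ∈ S k, f ξ ≤ ENNReal.ofReal (C * X ^ (-N)) * G ξ := by
          intro ξ hξ
          have hlow : 2 ^ k * ρ ≤ ‖ξ‖ := hξ.1
          have hexp1 : Real.exp (-(2 * t) * ‖ξ‖ ^ (2 * α)) ≤ Real.exp (-X) := by
            apply Real.exp_le_exp.mpr
            rw [hXdef]
            have h7 : (2 ^ k * ρ) ^ (2 * α) ≤ ‖ξ‖ ^ (2 * α) :=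
              Real.rpow_le_rpow (by positivity) hlow (by positivity)
            nlinarith
          have hexp2 : Real.exp (-X) ≤ C * X ^ (-N) := hCx X hXpos
          simp only [hfdef, hGdef]
          rw [← ENNReal.ofReal_mul (by positivity)]
          apply ENNReal.ofReal_le_ofReal
          nlinarith [sq_nonneg ‖g ξ‖, Real.exp_pos (-(2 * t) * ‖ξ‖ ^ (2 * α))]
        calc (∫⁻ ξ in S k, f ξ)
            ≤ ∫⁻ ξ in S k, ENNReal.ofReal (C * X ^ (-N)) * G ξ := by
              apply setLIntegral_mono_ae (by fun_prop)
              exact Filter.Eventually.of_forall hptS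
          _ = ENNReal.ofReal (C * X ^ (-N)) * ∫⁻ ξ in S k, G ξ :=
              lintegral_const_mul' _ _ ENNReal.ofReal_ne_top
          _ ≤ ENNReal.ofReal (C * X ^ (-N)) * F (2 ^ (k+1) * ρ) := by
              apply mul_le_mul_right
              apply lintegral_mono_set
              intro ξ hξ
              exact hξ.2
          _ ≤ ENNReal.ofReal (C * X ^ (-N)) * (B' * ENNReal.ofReal ((2 ^ (k+1) * ρ) ^ e)) := by
              apply mul_le_mul_right
              exact hF' _ (by positivity)
          _ = B' * (ENNReal.ofReal (C * X ^ (-N)) * ENNReal.ofReal (((2:ℝ) ^ (k+1) * ρ) ^ e)) :=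
              mul_left_comm _ _ _
          _ = B' * ENNReal.ofReal (C * X ^ (-N) * ((2 ^ (k+1) * ρ) ^ e)) := by
              rw [← ENNReal.ofReal_mul (by positivity)]
          _ = B' * ENNReal.ofReal (C * 2 ^ e * ((2 * t) ^ (-N) * ρ ^ (e - 2 * α * N)) * q ^ k) := by
              rw [hXdef, shell_scalar C t ρ α N e ht0 hρpos k]
          _ = B' * ENNReal.ofReal (C * 2 ^ e * ((2 * t) ^ (-N) * ρ ^ (e - 2 * α * N))) *
              ENNReal.ofReal (q ^ k) := by
              rw [ENNReal.ofReal_mul (by positivity)]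
              exact (mul_assoc _ _ _).symm
      -- sum the shells
      have hsum : (∑' k, ∫⁻ ξ in S k, f ξ)
          ≤ B' * ENNReal.ofReal (C * 2 ^ e * ((2 * t) ^ (-N) * ρ ^ (e - 2 * α * N))) *
            (1 - ENNReal.ofReal q)⁻¹ := by
        calc (∑' k, ∫⁻ ξ in S k, f ξ)
            ≤ ∑' k, B' * ENNReal.ofReal (C * 2 ^ e * ((2 * t) ^ (-N) * ρ ^ (e - 2 * α * N))) *
              ENNReal.ofReal (q ^ k) := ENNReal.tsum_le_tsum hshell
          _ = B' * ENNReal.ofReal (C * 2 ^ e * ((2 * t) ^ (-N) * ρ ^ (e - 2 * α * N))) *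
              ∑' k, ENNReal.ofReal (q ^ k) := ENNReal.tsum_mul_left
          _ = B' * ENNReal.ofReal (C * 2 ^ e * ((2 * t) ^ (-N) * ρ ^ (e - 2 * α * N))) *
              (1 - ENNReal.ofReal q)⁻¹ := by
              congr 1
              have : ∀ k : ℕ, ENNReal.ofReal (q ^ k) = (ENNReal.ofReal q) ^ k := by
                intro k; rw [ENNReal.ofReal_pow hq0]
              rw [tsum_congr this, ENNReal.tsum_geometric]
      -- bound the scalar
      have hscal : (2 * t) ^ (-N) * ρ ^ (e - 2 * α * N) ≤ (1 + t) ^ (-β) := by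
        have h8 : (2 * t) ^ (-N) ≤ (1 + t) ^ (-N) := by
          apply Real.rpow_le_rpow_of_nonpos h1t (by linarith) (by linarith)
        have h9 : ρ ^ (e - 2 * α * N) = (1 + t) ^ (N - β) := by
          rw [hρdef, ← Real.rpow_mul h1t.le]
          congr 1
          rw [hβ]
          field_simp
          ring
        rw [h9]
        have h10 : (0:ℝ) ≤ (1 + t) ^ (N - β) := Real.rpow_nonneg h1t.le _
        calc (2 * t) ^ (-N) * (1 + t) ^ (N - β) ≤ (1 + t) ^ (-N) * (1 + t) ^ (N - β) := by
              nlinarith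
          _ = (1 + t) ^ (-β) := by
              rw [← Real.rpow_add h1t]
              congr 1
              ring
      -- combine
      calc Ealpha n g α t ≤ _ := hsplit
        _ ≤ B' * ENNReal.ofReal ((1 + t) ^ (-β)) +
            B' * ENNReal.ofReal (C * 2 ^ e * ((2 * t) ^ (-N) * ρ ^ (e - 2 * α * N))) *
            (1 - ENNReal.ofReal q)⁻¹ := add_le_add hball hsum
        _ ≤ B' * ENNReal.ofReal ((1 + t) ^ (-β)) +
            B' * ENNReal.ofReal (C * 2 ^ e * (1 + t) ^ (-β)) * (1 - ENNReal.ofReal q)⁻¹ := by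
            gcongr
        _ = B' * ENNReal.ofReal ((1 + t) ^ (-β)) +
            B' * K * ENNReal.ofReal ((1 + t) ^ (-β)) := by
            rw [hKdef, ENNReal.ofReal_mul (by positivity)]
            ring
        _ = D * ENNReal.ofReal ((1 + t) ^ (-β)) := by
            rw [hDdef]; ring
    -- final constant
    refine ⟨D.toReal + A.toReal * (1 + T) ^ β + 1, by positivity, fun t ht => ?_⟩
    have h1t : (0:ℝ) < 1 + t := by linarith
    rw [show -(r + (n:ℝ)/2)/α = -β from hexp]
    rcases le_or_gt t T with hcase2 | hcase2
    · -- small time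
      have h11 : (1:ℝ) ≤ (1 + T) ^ β * (1 + t) ^ (-β) := by
        have h12 : (1 + T) ^ (-β) ≤ (1 + t) ^ (-β) :=
          Real.rpow_le_rpow_of_nonpos h1t (by linarith) (by linarith)
        have h13 : (1 + T) ^ β * (1 + T) ^ (-β) = 1 := by
          rw [← Real.rpow_add (by linarith)]
          norm_num
        nlinarith [Real.rpow_pos_of_pos (show (0:ℝ) < 1 + T by linarith) β]
      calc Ealpha n g α t ≤ A := hEA t ht
        _ = ENNReal.ofReal A.toReal := (ENNReal.ofReal_toReal hA.ne).symm
        _ ≤ ENNReal.ofReal ((D.toReal + A.toReal * (1 + T) ^ β + 1) * (1 + t) ^ (-β)) := by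
            apply ENNReal.ofReal_le_ofReal
            have h14 : (0:ℝ) ≤ (1 + t) ^ (-β) := Real.rpow_nonneg h1t.le _
            have h15 : (0:ℝ) ≤ D.toReal := ENNReal.toReal_nonneg
            nlinarith [ENNReal.toReal_nonneg (a := A)]
    · -- large time
      calc Ealpha n g α t ≤ D * ENNReal.ofReal ((1 + t) ^ (-β)) := hmain t hcase2
        _ = ENNReal.ofReal (D.toReal * (1 + t) ^ (-β)) := by
            rw [ENNReal.ofReal_mul ENNReal.toReal_nonneg, ENNReal.ofReal_toReal hDfin]
        _ ≤ ENNReal.ofReal ((D.toReal + A.toReal * (1 + T) ^ β + 1) * (1 + t) ^ (-β)) := by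
            apply ENNReal.ofReal_le_ofReal
            have h14 : (0:ℝ) ≤ (1 + t) ^ (-β) := Real.rpow_nonneg h1t.le _
            have h16 : (0:ℝ) ≤ A.toReal * (1 + T) ^ β := by positivity
            nlinarith
end
end

section
/- Let n ≥ 1, α > 0, r* ∈ (−n/2, ∞), and let g ∈ L²(ℝⁿ) be measurable. Then the following are equivalent: (a) 0 < P_{r*}(g)₋ and P_{r*}(g)₊ < ∞ (i.e. the decay character of g exists and equals r*); (b) there exist constants C₁, C₂ > 0 such that for all t ≥ 0: C₁ (1+t)^{−(r*+n/2)/α} ≤ ∫_{ℝⁿ} e^{−2t|ξ|^{2α}} |g(ξ)|² dξ ≤ C₂ (1+t)^{−(r*+n/2)/α}. -/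
open MeasureTheory Filter Topology
open scoped ENNReal NNReal

noncomputable section

lemma exp_eq_lint (b : ℝ) :
    ENNReal.ofReal (Real.exp (-b)) = ∫⁻ u in Set.Ioi b, ENNReal.ofReal (Real.exp (-u)) := by
  rw [← ofReal_integral_eq_lintegral_ofReal, integral_exp_neg_Ioi]
  · simpa using (exp_neg_integrableOn_Ioi b one_pos).integrable
  · exact Eventually.of_forall fun x => (Real.exp_pos _).le

lemma lint_exp_eq {X : Type*} [MeasurableSpace X] (μ : Measure X) [SFinite μ]
    {a : X → ℝ} (ha : Measurable a) (ha0 : ∀ x, 0 ≤ a x) :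
    ∫⁻ x, ENNReal.ofReal (Real.exp (-(a x))) ∂μ
      = ∫⁻ u in Set.Ioi (0:ℝ), ENNReal.ofReal (Real.exp (-u)) * μ {x | a x < u} := by
  have hS : MeasurableSet {p : X × ℝ | a p.1 < p.2} :=
    measurableSet_lt (ha.comp measurable_fst) measurable_snd
  calc ∫⁻ x, ENNReal.ofReal (Real.exp (-(a x))) ∂μ
      = ∫⁻ x, ∫⁻ u, ENNReal.ofReal (Real.exp (-u)) *
          ({p : X × ℝ | a p.1 < p.2}.indicator 1 (x, u)) ∂volume ∂μ := by
        refine lintegral_congr fun x => ?_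
        rw [exp_eq_lint (a x), ← lintegral_indicator measurableSet_Ioi]
        refine lintegral_congr fun u => ?_
        by_cases h : a x < u
        · simp [Set.indicator_of_mem, h, Set.mem_Ioi]
        · simp [Set.indicator_of_notMem, h, Set.mem_Ioi]
    _ = ∫⁻ u, ∫⁻ x, ENNReal.ofReal (Real.exp (-u)) *
          ({p : X × ℝ | a p.1 < p.2}.indicator 1 (x, u)) ∂μ ∂volume := by
        refine lintegral_lintegral_swap ?_
        refine Measurable.aemeasurable ?_
        exact ((ENNReal.measurable_ofReal.comp (Real.measurable_exp.comp measurable_snd.neg)).mul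
          (Measurable.indicator measurable_const hS))
    _ = ∫⁻ u, ENNReal.ofReal (Real.exp (-u)) * μ {x | a x < u} ∂volume := by
        refine lintegral_congr fun u => ?_
        rw [lintegral_const_mul' _ _ ENNReal.ofReal_ne_top]
        congr 1
        rw [← lintegral_indicator_one (measurableSet_lt ha measurable_const)]
        refine lintegral_congr fun x => ?_
        by_cases h : a x < u
        · simp [h]
        · simp [h]
    _ = ∫⁻ u in Set.Ioi (0:ℝ), ENNReal.ofReal (Real.exp (-u)) * μ {x | a x < u} := by
        rw [← lintegral_indicator measurableSet_Ioi]
        refine lintegral_congr fun u => ?_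
        by_cases h : (0:ℝ) < u
        · simp [Set.indicator_of_mem, h, Set.mem_Ioi]
        · have : {x | a x < u} = ∅ := by
            ext x; simp only [Set.mem_setOf_eq, Set.mem_empty_iff_false, iff_false, not_lt]
            exact le_trans (not_lt.mp h) (ha0 x)
          simp [Set.indicator_of_notMem, h, Set.mem_Ioi, this]

lemma lint_gamma {κ : ℝ} (hκ : 0 ≤ κ) :
    ∫⁻ u in Set.Ioi (0:ℝ), ENNReal.ofReal (Real.exp (-u) * u ^ κ)
      = ENNReal.ofReal (Real.Gamma (κ + 1)) := by
  have h1 : (0:ℝ) < κ + 1 := by linarith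
  rw [Real.Gamma_eq_integral h1, ofReal_integral_eq_lintegral_ofReal]
  · simp only [add_sub_cancel_right]
  · simpa only [add_sub_cancel_right] using (Real.GammaIntegral_convergent h1).integrable
  · filter_upwards [self_mem_ae_restrict (measurableSet_Ioi : MeasurableSet (Set.Ioi (0:ℝ)))]
      with x hx
    simp only [add_sub_cancel_right]
    exact mul_nonneg (Real.exp_pos _).le (Real.rpow_nonneg (le_of_lt hx) _)

namespace S5

variable (n : ℕ) (g : EuclideanSpace ℝ (Fin n) → ℂ) (α : ℝ)

def mu : Measure (EuclideanSpace ℝ (Fin n)) :=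
  volume.withDensity fun ξ => ENNReal.ofReal (‖g ξ‖ ^ 2)

lemma meas_rpow (c : ℝ) : Measurable fun x : ℝ => x ^ c := by measurability

lemma hSm (ρ : ℝ) : MeasurableSet {ξ : EuclideanSpace ℝ (Fin n) | ‖ξ‖ ≤ ρ} :=
  measurableSet_le measurable_norm measurable_const

variable {g}

lemma hd (hg_meas : Measurable g) :
    Measurable fun ξ => ENNReal.ofReal (‖g ξ‖ ^ 2) :=
  (hg_meas.norm.pow_const 2).ennreal_ofReal

lemma hexp_meas (t : ℝ) :
    Measurable fun ξ : EuclideanSpace ℝ (Fin n) =>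
      ENNReal.ofReal (Real.exp (-(2 * t) * ‖ξ‖ ^ (2 * α))) :=
  ((((meas_rpow (2*α)).comp measurable_norm).const_mul (-(2*t))).exp).ennreal_ofReal

lemma hE_meas (hg_meas : Measurable g) (t : ℝ) :
    Measurable fun ξ : EuclideanSpace ℝ (Fin n) =>
      ENNReal.ofReal (Real.exp (-(2 * t) * ‖ξ‖ ^ (2 * α)) * ‖g ξ‖ ^ 2) :=
  (((((meas_rpow (2*α)).comp measurable_norm).const_mul (-(2*t))).exp).mul
    (hg_meas.norm.pow_const 2)).ennreal_ofReal

lemma mu_set (ρ : ℝ) :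
    mu n g {ξ : EuclideanSpace ℝ (Fin n) | ‖ξ‖ ≤ ρ}
      = ∫⁻ ξ in {ξ : EuclideanSpace ℝ (Fin n) | ‖ξ‖ ≤ ρ}, ENNReal.ofReal (‖g ξ‖ ^ 2) :=
  withDensity_apply _ (hSm n ρ)

lemma decay_eq (r ρ : ℝ) :
    decayFun n g r ρ = ENNReal.ofReal (ρ ^ (-(2 * r + (n : ℝ)))) *
      mu n g {ξ : EuclideanSpace ℝ (Fin n) | ‖ξ‖ ≤ ρ} := by
  rw [decayFun, mu_set]

lemma Ealpha_mu (hg_meas : Measurable g) (t : ℝ) :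
    Ealpha n g α t = ∫⁻ ξ, ENNReal.ofReal (Real.exp (-(2 * t) * ‖ξ‖ ^ (2 * α))) ∂(mu n g) := by
  rw [Ealpha, mu, lintegral_withDensity_eq_lintegral_mul _ (hd n hg_meas) (hexp_meas n α t)]
  refine lintegral_congr fun ξ => ?_
  simp only [Pi.mul_apply]
  rw [← ENNReal.ofReal_mul (by positivity : (0:ℝ) ≤ ‖g ξ‖ ^ 2)]
  ring_nf

lemma mu_univ_lt_top (hg : MemLp g 2 (volume : Measure (EuclideanSpace ℝ (Fin n)))) :
    mu n g Set.univ < ⊤ := by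
  have h2 := lintegral_rpow_enorm_lt_top_of_eLpNorm_lt_top (f := g)
    (two_ne_zero) (by norm_num) hg.2
  rw [mu, withDensity_apply _ MeasurableSet.univ, Measure.restrict_univ]
  refine lt_of_le_of_lt (le_of_eq (lintegral_congr fun ξ => ?_)) h2
  rw [ENNReal.ofReal_pow (norm_nonneg _), ofReal_norm]
  rw [ENNReal.toReal_ofNat]
  rw [show ((2:ℝ)) = ((2:ℕ):ℝ) by norm_num, ENNReal.rpow_natCast]

lemma Elb (hg_meas : Measurable g) (hα : 0 < α) {t ρ : ℝ} (ht : 0 ≤ t) (hρ : 0 < ρ) :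
    ENNReal.ofReal (Real.exp (-(2 * t) * ρ ^ (2 * α))) *
      mu n g {ξ : EuclideanSpace ℝ (Fin n) | ‖ξ‖ ≤ ρ} ≤ Ealpha n g α t := by
  rw [mu_set]
  calc ENNReal.ofReal (Real.exp (-(2 * t) * ρ ^ (2 * α))) *
        ∫⁻ ξ in {ξ : EuclideanSpace ℝ (Fin n) | ‖ξ‖ ≤ ρ}, ENNReal.ofReal (‖g ξ‖ ^ 2)
      = ∫⁻ ξ in {ξ : EuclideanSpace ℝ (Fin n) | ‖ξ‖ ≤ ρ},
          ENNReal.ofReal (Real.exp (-(2 * t) * ρ ^ (2 * α))) * ENNReal.ofReal (‖g ξ‖ ^ 2) :=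
        (lintegral_const_mul' _ _ ENNReal.ofReal_ne_top).symm
    _ ≤ ∫⁻ ξ in {ξ : EuclideanSpace ℝ (Fin n) | ‖ξ‖ ≤ ρ},
          ENNReal.ofReal (Real.exp (-(2 * t) * ‖ξ‖ ^ (2 * α)) * ‖g ξ‖ ^ 2) := by
        refine setLIntegral_mono (hE_meas n α hg_meas t) fun ξ hξ => ?_
        rw [← ENNReal.ofReal_mul (Real.exp_pos _).le]
        refine ENNReal.ofReal_le_ofReal (mul_le_mul_of_nonneg_right ?_ (by positivity))
        refine Real.exp_le_exp.mpr ?_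
        have h1 : ‖ξ‖ ^ (2*α) ≤ ρ ^ (2*α) :=
          Real.rpow_le_rpow (norm_nonneg _) hξ (by positivity)
        nlinarith
    _ ≤ Ealpha n g α t := setLIntegral_le_lintegral _ _

lemma Eup_triv (hg_meas : Measurable g) {t : ℝ} (ht : 0 ≤ t) :
    Ealpha n g α t ≤ mu n g Set.univ := by
  rw [mu, withDensity_apply _ MeasurableSet.univ, Measure.restrict_univ, Ealpha]
  refine lintegral_mono fun ξ => ENNReal.ofReal_le_ofReal ?_
  have h1 : Real.exp (-(2 * t) * ‖ξ‖ ^ (2 * α)) ≤ 1 := by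
    rw [Real.exp_le_one_iff]
    have : (0:ℝ) ≤ ‖ξ‖ ^ (2*α) := Real.rpow_nonneg (norm_nonneg _) _
    nlinarith
  nlinarith [Real.exp_pos (-(2 * t) * ‖ξ‖ ^ (2 * α)), sq_nonneg ‖g ξ‖]

lemma Esplit (hg_meas : Measurable g) (hα : 0 < α) {t ρ : ℝ} (ht : 0 ≤ t) (hρ : 0 < ρ) :
    Ealpha n g α (2 * t) ≤ mu n g {ξ : EuclideanSpace ℝ (Fin n) | ‖ξ‖ ≤ ρ}
      + ENNReal.ofReal (Real.exp (-(2 * t) * ρ ^ (2 * α))) * Ealpha n g α t := by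
  rw [Ealpha, ← lintegral_add_compl
      (fun ξ => ENNReal.ofReal (Real.exp (-(2 * (2*t)) * ‖ξ‖ ^ (2 * α)) * ‖g ξ‖ ^ 2))
      (hSm n ρ)]
  refine add_le_add ?_ ?_
  · rw [mu_set]
    refine setLIntegral_mono (hd n hg_meas) fun ξ hξ => ENNReal.ofReal_le_ofReal ?_
    have h1 : Real.exp (-(2 * (2*t)) * ‖ξ‖ ^ (2 * α)) ≤ 1 := by
      rw [Real.exp_le_one_iff]
      have : (0:ℝ) ≤ ‖ξ‖ ^ (2*α) := Real.rpow_nonneg (norm_nonneg _) _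
      nlinarith
    nlinarith [Real.exp_pos (-(2 * (2*t)) * ‖ξ‖ ^ (2 * α)), sq_nonneg ‖g ξ‖]
  · calc ∫⁻ ξ in {ξ : EuclideanSpace ℝ (Fin n) | ‖ξ‖ ≤ ρ}ᶜ,
          ENNReal.ofReal (Real.exp (-(2 * (2*t)) * ‖ξ‖ ^ (2 * α)) * ‖g ξ‖ ^ 2)
        ≤ ∫⁻ ξ in {ξ : EuclideanSpace ℝ (Fin n) | ‖ξ‖ ≤ ρ}ᶜ,
          ENNReal.ofReal (Real.exp (-(2 * t) * ρ ^ (2 * α))) *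
            ENNReal.ofReal (Real.exp (-(2 * t) * ‖ξ‖ ^ (2 * α)) * ‖g ξ‖ ^ 2) := by
          refine setLIntegral_mono ((measurable_const).mul (hE_meas n α hg_meas t))
            fun ξ hξ => ?_
          rw [← ENNReal.ofReal_mul (Real.exp_pos _).le]
          refine ENNReal.ofReal_le_ofReal ?_
          have hξ' : ρ < ‖ξ‖ := by simpa using hξ
          have h1 : ρ ^ (2*α) ≤ ‖ξ‖ ^ (2*α) :=
            Real.rpow_le_rpow hρ.le hξ'.le (by positivity)
          have h2 : Real.exp (-(2 * (2*t)) * ‖ξ‖ ^ (2 * α))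
              ≤ Real.exp (-(2 * t) * ρ ^ (2 * α)) * Real.exp (-(2 * t) * ‖ξ‖ ^ (2 * α)) := by
            rw [← Real.exp_add, Real.exp_le_exp]
            nlinarith
          calc Real.exp (-(2 * (2*t)) * ‖ξ‖ ^ (2 * α)) * ‖g ξ‖ ^ 2
              ≤ (Real.exp (-(2 * t) * ρ ^ (2 * α)) * Real.exp (-(2 * t) * ‖ξ‖ ^ (2 * α)))
                  * ‖g ξ‖ ^ 2 := by nlinarith [sq_nonneg ‖g ξ‖]
            _ = Real.exp (-(2 * t) * ρ ^ (2 * α))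
                  * (Real.exp (-(2 * t) * ‖ξ‖ ^ (2 * α)) * ‖g ξ‖ ^ 2) := by ring
      _ = ENNReal.ofReal (Real.exp (-(2 * t) * ρ ^ (2 * α))) *
            ∫⁻ ξ in {ξ : EuclideanSpace ℝ (Fin n) | ‖ξ‖ ≤ ρ}ᶜ,
              ENNReal.ofReal (Real.exp (-(2 * t) * ‖ξ‖ ^ (2 * α)) * ‖g ξ‖ ^ 2) :=
          lintegral_const_mul' _ _ ENNReal.ofReal_ne_top
      _ ≤ ENNReal.ofReal (Real.exp (-(2 * t) * ρ ^ (2 * α))) * Ealpha n g α t := by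
          exact mul_le_mul_right (setLIntegral_le_lintegral _ _) _


lemma E_layer (hg_meas : Measurable g)
    (hg : MemLp g 2 (volume : Measure (EuclideanSpace ℝ (Fin n)))) {t : ℝ} (ht : 0 ≤ t) :
    Ealpha n g α t = ∫⁻ u in Set.Ioi (0:ℝ), ENNReal.ofReal (Real.exp (-u)) *
      mu n g {ξ : EuclideanSpace ℝ (Fin n) | 2 * t * ‖ξ‖ ^ (2 * α) < u} := by
  haveI : IsFiniteMeasure (mu n g) := ⟨mu_univ_lt_top n hg⟩
  rw [Ealpha_mu n α hg_meas t]
  have h := lint_exp_eq (mu n g) (a := fun ξ : EuclideanSpace ℝ (Fin n) => 2*t*‖ξ‖^(2*α))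
    (((meas_rpow (2*α)).comp measurable_norm).const_mul (2*t))
    (fun ξ => mul_nonneg (by linarith) (Real.rpow_nonneg (norm_nonneg _) _))
  simp only [neg_mul] at h ⊢
  exact h

end S5
set_option maxHeartbeats 2000000 in
theorem stmt5 (n : ℕ) (hn : 1 ≤ n) (α : ℝ) (hα : 0 < α) (rstar : ℝ)
    (hlow : -(n : ℝ) / 2 < rstar)
    (g : EuclideanSpace ℝ (Fin n) → ℂ)
    (hg_meas : Measurable g) (hg : MemLp g 2 (volume : Measure (EuclideanSpace ℝ (Fin n)))) :
    (0 < Pminus n g rstar ∧ Pplus n g rstar < ⊤) ↔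
    (∃ C₁ C₂ : ℝ, 0 < C₁ ∧ 0 < C₂ ∧ ∀ t : ℝ, 0 ≤ t →
      ENNReal.ofReal (C₁ * (1 + t) ^ (-(rstar + (n : ℝ) / 2) / α)) ≤ Ealpha n g α t ∧
      Ealpha n g α t ≤ ENNReal.ofReal (C₂ * (1 + t) ^ (-(rstar + (n : ℝ) / 2) / α))) := by
  classical
  have hn2 : (0:ℝ) < (n:ℝ) := by exact_mod_cast Nat.pos_of_ne_zero (by omega)
  have hβ : (0:ℝ) < 2 * rstar + (n:ℝ) := by linarith
  set β : ℝ := 2 * rstar + (n:ℝ) with hβdef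
  set κ : ℝ := (rstar + (n:ℝ)/2)/α with hκdef
  have hκpos : 0 < κ := div_pos (by linarith) hα
  have hexpeq : -(rstar + (n:ℝ)/2)/α = -κ := by rw [hκdef]; ring
  have h2ακ : 2*α*κ = β := by rw [hκdef, hβdef]; field_simp
  have hβκ : 1/(2*α)*β = κ := by rw [hκdef, hβdef]; field_simp
  have hPne : ∀ ρ : ℝ, 0 < ρ → (ENNReal.ofReal (ρ ^ β) ≠ 0 ∧ ENNReal.ofReal (ρ ^ β) ≠ ⊤) :=
    fun ρ hρ => ⟨ne_of_gt (ENNReal.ofReal_pos.mpr (Real.rpow_pos_of_pos hρ β)),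
      ENNReal.ofReal_ne_top⟩
  have hdecay : ∀ ρ : ℝ, 0 < ρ → decayFun n g rstar ρ
      = S5.mu n g {ξ : EuclideanSpace ℝ (Fin n) | ‖ξ‖ ≤ ρ} / ENNReal.ofReal (ρ ^ β) := by
    intro ρ hρ
    rw [S5.decay_eq, show -(2*rstar + (n:ℝ)) = -β by rw [hβdef],
      Real.rpow_neg hρ.le, ENNReal.ofReal_inv_of_pos (Real.rpow_pos_of_pos hρ β),
      ENNReal.div_eq_inv_mul]
  have hdec_le_iff : ∀ (ρ : ℝ), 0 < ρ → ∀ C : ℝ≥0∞, (decayFun n g rstar ρ ≤ C ↔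
      S5.mu n g {ξ : EuclideanSpace ℝ (Fin n) | ‖ξ‖ ≤ ρ} ≤ C * ENNReal.ofReal (ρ ^ β)) := by
    intro ρ hρ C
    rw [hdecay ρ hρ]
    exact ENNReal.div_le_iff_le_mul (Or.inl (hPne ρ hρ).1) (Or.inl (hPne ρ hρ).2)
  have hdec_ge_iff : ∀ (ρ : ℝ), 0 < ρ → ∀ C : ℝ≥0∞, (C ≤ decayFun n g rstar ρ ↔
      C * ENNReal.ofReal (ρ ^ β) ≤ S5.mu n g {ξ : EuclideanSpace ℝ (Fin n) | ‖ξ‖ ≤ ρ}) := by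
    intro ρ hρ C
    rw [hdecay ρ hρ]
    exact ENNReal.le_div_iff_mul_le (Or.inl (hPne ρ hρ).1) (Or.inl (hPne ρ hρ).2)
  have hMfin : S5.mu n g Set.univ < ⊤ := S5.mu_univ_lt_top n hg
  set Mreal : ℝ := (S5.mu n g Set.univ).toReal with hMdef
  have hMreal : (0:ℝ) ≤ Mreal := ENNReal.toReal_nonneg
  have hMeq : S5.mu n g Set.univ = ENNReal.ofReal Mreal := (ENNReal.ofReal_toReal hMfin.ne).symm
  constructor
  · rintro ⟨hPm, hPp⟩
    have hPp1 : Pplus n g rstar < Pplus n g rstar + 1 :=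
      ENNReal.lt_add_right hPp.ne one_ne_zero
    have h1 : ∀ᶠ ρ in 𝓝[>] (0:ℝ), decayFun n g rstar ρ < Pplus n g rstar + 1 :=
      eventually_lt_of_limsup_lt hPp1
    have hminpos : (0:ℝ≥0∞) < min 1 (Pminus n g rstar) := lt_min one_pos hPm
    have hminne : min 1 (Pminus n g rstar) ≠ ⊤ :=
      (lt_of_le_of_lt (min_le_left _ _) ENNReal.one_lt_top).ne
    set c : ℝ≥0∞ := min 1 (Pminus n g rstar) / 2 with hcdef
    have hcpos : 0 < c := ENNReal.half_pos hminpos.ne'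
    have hcne : c ≠ ⊤ := by
      rw [hcdef]
      exact (ENNReal.div_lt_top hminne (by norm_num)).ne
    have hclt : c < Pminus n g rstar :=
      lt_of_lt_of_le (ENNReal.half_lt_self hminpos.ne' hminne) (min_le_right _ _)
    have h2 : ∀ᶠ ρ in 𝓝[>] (0:ℝ), c < decayFun n g rstar ρ :=
      eventually_lt_of_lt_liminf hclt
    obtain ⟨ρ₀, hρ₀', hsub⟩ := mem_nhdsGT_iff_exists_Ioc_subset.mp (h1.and h2)
    rw [Set.mem_Ioi] at hρ₀'
    have hρ₀ : (0:ℝ) < ρ₀ := hρ₀'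
    have hPp1ne : Pplus n g rstar + 1 ≠ ⊤ := by
      simp [ENNReal.add_ne_top, hPp.ne]
    set Cp : ℝ := (Pplus n g rstar + 1).toReal with hCpdef
    have hCp_pos : 0 < Cp :=
      ENNReal.toReal_pos (ne_of_gt (lt_of_lt_of_le zero_lt_one le_add_self)) hPp1ne
    have hCp_eq : Pplus n g rstar + 1 = ENNReal.ofReal Cp := (ENNReal.ofReal_toReal hPp1ne).symm
    set creal : ℝ := c.toReal with hcrdef
    have hcreal_pos : 0 < creal := ENNReal.toReal_pos hcpos.ne' hcne
    have hcreal_eq : c = ENNReal.ofReal creal := (ENNReal.ofReal_toReal hcne).symm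
    have hFup : ∀ ρ : ℝ, 0 < ρ → ρ ≤ ρ₀ →
        S5.mu n g {ξ : EuclideanSpace ℝ (Fin n) | ‖ξ‖ ≤ ρ} ≤ ENNReal.ofReal (Cp * ρ ^ β) := by
      intro ρ h1' h2'
      have hh := hsub ⟨h1', h2'⟩
      have h3 := (hdec_le_iff ρ h1' (ENNReal.ofReal Cp)).mp (le_of_lt (hCp_eq ▸ hh.1))
      rwa [← ENNReal.ofReal_mul hCp_pos.le] at h3
    have hFlow : ∀ ρ : ℝ, 0 < ρ → ρ ≤ ρ₀ →
        ENNReal.ofReal (creal * ρ ^ β) ≤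
          S5.mu n g {ξ : EuclideanSpace ℝ (Fin n) | ‖ξ‖ ≤ ρ} := by
      intro ρ h1' h2'
      have hh := hsub ⟨h1', h2'⟩
      have h3 := (hdec_ge_iff ρ h1' c).mp (le_of_lt hh.2)
      rwa [hcreal_eq, ← ENNReal.ofReal_mul hcreal_pos.le] at h3
    set CF : ℝ := max Cp (Mreal * ρ₀ ^ (-β)) with hCFdef
    have hCFpos : 0 < CF := lt_of_lt_of_le hCp_pos (le_max_left _ _)
    have hFglob : ∀ ρ : ℝ, 0 < ρ →
        S5.mu n g {ξ : EuclideanSpace ℝ (Fin n) | ‖ξ‖ ≤ ρ} ≤ ENNReal.ofReal (CF * ρ ^ β) := by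
      intro ρ hρ
      rcases le_or_gt ρ ρ₀ with hle | hgt
      · exact le_trans (hFup ρ hρ hle) (ENNReal.ofReal_le_ofReal
          (mul_le_mul_of_nonneg_right (le_max_left _ _) (Real.rpow_nonneg hρ.le β)))
      · refine le_trans (le_trans (measure_mono (Set.subset_univ _)) hMeq.le)
          (ENNReal.ofReal_le_ofReal ?_)
        have h1' : ρ₀ ^ β ≤ ρ ^ β := Real.rpow_le_rpow hρ₀.le hgt.le hβ.le
        have h2' : (0:ℝ) < ρ₀ ^ β := Real.rpow_pos_of_pos hρ₀ β
        have h3' : (0:ℝ) < ρ₀ ^ (-β) := Real.rpow_pos_of_pos hρ₀ _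
        have h4' : ρ₀ ^ (-β) * ρ₀ ^ β = 1 := by
          rw [← Real.rpow_add hρ₀]; simp
        have h5' : (1:ℝ) ≤ ρ₀ ^ (-β) * ρ ^ β := by nlinarith
        calc Mreal = Mreal * 1 := by ring
          _ ≤ Mreal * (ρ₀ ^ (-β) * ρ ^ β) := by nlinarith
          _ = (Mreal * ρ₀ ^ (-β)) * ρ ^ β := by ring
          _ ≤ CF * ρ ^ β :=
              mul_le_mul_of_nonneg_right (le_max_right _ _) (Real.rpow_nonneg hρ.le β)
    have hΓpos : 0 < Real.Gamma (κ + 1) := Real.Gamma_pos_of_pos (by linarith)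
    have hEub : ∀ t : ℝ, 0 < t →
        Ealpha n g α t ≤ ENNReal.ofReal (CF * Real.Gamma (κ+1) * (2*t) ^ (-κ)) := by
      intro t ht
      have h2t : (0:ℝ) < 2*t := by linarith
      rw [S5.E_layer n α hg_meas hg ht.le]
      have key : ∀ u ∈ Set.Ioi (0:ℝ),
          ENNReal.ofReal (Real.exp (-u)) *
            S5.mu n g {ξ : EuclideanSpace ℝ (Fin n) | 2*t*‖ξ‖^(2*α) < u}
          ≤ ENNReal.ofReal (CF / (2*t)^κ) * ENNReal.ofReal (Real.exp (-u) * u ^ κ) := by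
        intro u hu
        rw [Set.mem_Ioi] at hu
        set r : ℝ := (u/(2*t)) ^ (1/(2*α)) with hrdef
        have hudiv : (0:ℝ) < u/(2*t) := div_pos hu h2t
        have hrpos : 0 < r := Real.rpow_pos_of_pos hudiv _
        have hsubset : {ξ : EuclideanSpace ℝ (Fin n) | 2*t*‖ξ‖^(2*α) < u}
            ⊆ {ξ : EuclideanSpace ℝ (Fin n) | ‖ξ‖ ≤ r} := by
          intro ξ hξ
          simp only [Set.mem_setOf_eq] at hξ ⊢
          have ha : ‖ξ‖ ^ (2*α) ≤ u / (2*t) := by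
            rw [le_div_iff₀ h2t]; nlinarith
          have hb := Real.rpow_le_rpow (Real.rpow_nonneg (norm_nonneg _) _) ha
            (by positivity : (0:ℝ) ≤ 1/(2*α))
          calc ‖ξ‖ = (‖ξ‖^(2*α))^(1/(2*α)) := by
                rw [← Real.rpow_mul (norm_nonneg _),
                  show (2*α)*(1/(2*α)) = 1 by field_simp, Real.rpow_one]
            _ ≤ r := hb
        have hrβ : r ^ β = u ^ κ / (2*t) ^ κ := by
          rw [hrdef, ← Real.rpow_mul hudiv.le, hβκ, Real.div_rpow hu.le h2t.le]
        calc ENNReal.ofReal (Real.exp (-u)) *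
              S5.mu n g {ξ : EuclideanSpace ℝ (Fin n) | 2*t*‖ξ‖^(2*α) < u}
            ≤ ENNReal.ofReal (Real.exp (-u)) * ENNReal.ofReal (CF * r ^ β) :=
              mul_le_mul_right (le_trans (measure_mono hsubset) (hFglob r hrpos)) _
          _ = ENNReal.ofReal (CF / (2*t)^κ) * ENNReal.ofReal (Real.exp (-u) * u ^ κ) := by
              rw [← ENNReal.ofReal_mul (Real.exp_pos _).le,
                ← ENNReal.ofReal_mul (by positivity : (0:ℝ) ≤ CF / (2*t)^κ)]
              congr 1
              rw [hrβ]; ring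
      calc (∫⁻ u in Set.Ioi (0:ℝ), ENNReal.ofReal (Real.exp (-u)) *
              S5.mu n g {ξ : EuclideanSpace ℝ (Fin n) | 2*t*‖ξ‖^(2*α) < u})
          ≤ ∫⁻ u in Set.Ioi (0:ℝ), ENNReal.ofReal (CF/(2*t)^κ) *
              ENNReal.ofReal (Real.exp (-u) * u^κ) := by
            refine setLIntegral_mono ?_ key
            exact (((measurable_id.neg.exp).mul (S5.meas_rpow κ)).ennreal_ofReal).const_mul _
        _ = ENNReal.ofReal (CF/(2*t)^κ) *
              ∫⁻ u in Set.Ioi (0:ℝ), ENNReal.ofReal (Real.exp (-u) * u^κ) :=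
            lintegral_const_mul' _ _ ENNReal.ofReal_ne_top
        _ = ENNReal.ofReal (CF/(2*t)^κ) * ENNReal.ofReal (Real.Gamma (κ+1)) := by
            rw [lint_gamma hκpos.le]
        _ = ENNReal.ofReal (CF * Real.Gamma (κ+1) * (2*t)^(-κ)) := by
            rw [← ENNReal.ofReal_mul (by positivity : (0:ℝ) ≤ CF/(2*t)^κ)]
            congr 1
            rw [Real.rpow_neg h2t.le]
            ring
    refine ⟨creal * ρ₀ ^ β * Real.exp (-(2 * ρ₀ ^ (2*α))),
      max (CF * Real.Gamma (κ+1)) (Mreal * 2 ^ κ),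
      by positivity,
      lt_of_lt_of_le (by positivity) (le_max_left _ _),
      fun t ht => ?_⟩
    have h1t : (0:ℝ) < 1 + t := by linarith
    rw [hexpeq]
    constructor
    · -- lower bound
      set ρ : ℝ := ρ₀ * (1+t) ^ (-(1/(2*α))) with hρdef
      have hxpos : 0 < (1+t) ^ (-(1/(2*α))) := Real.rpow_pos_of_pos h1t _
      have hx1 : (1+t) ^ (-(1/(2*α))) ≤ 1 :=
        Real.rpow_le_one_of_one_le_of_nonpos (by linarith)
          (neg_nonpos.mpr (by positivity))
      have hρpos : 0 < ρ := by rw [hρdef]; positivity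
      have hρle : ρ ≤ ρ₀ := by
        rw [hρdef]
        calc ρ₀ * (1+t) ^ (-(1/(2*α))) ≤ ρ₀ * 1 :=
              mul_le_mul_of_nonneg_left hx1 hρ₀.le
          _ = ρ₀ := mul_one _
      have hexp1 : (-(1/(2*α)))*(2*α) = -1 := by field_simp
      have hk1 : ρ ^ (2*α) = ρ₀ ^ (2*α) * (1+t)⁻¹ := by
        rw [hρdef, Real.mul_rpow hρ₀.le hxpos.le, ← Real.rpow_mul h1t.le, hexp1,
          Real.rpow_neg_one]
      have hexp2 : (-(1/(2*α)))*β = -κ := by rw [← hβκ]; ring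
      have hk2 : ρ ^ β = ρ₀ ^ β * (1+t) ^ (-κ) := by
        rw [hρdef, Real.mul_rpow hρ₀.le hxpos.le, ← Real.rpow_mul h1t.le, hexp2]
      have step1 := S5.Elb n α hg_meas hα ht hρpos
      have step2 : ENNReal.ofReal (creal * ρ ^ β) ≤
          S5.mu n g {ξ : EuclideanSpace ℝ (Fin n) | ‖ξ‖ ≤ ρ} := hFlow ρ hρpos hρle
      have hmain : ENNReal.ofReal (Real.exp (-(2*t) * ρ^(2*α)) * (creal * ρ ^ β))
          ≤ Ealpha n g α t := by
        rw [ENNReal.ofReal_mul (Real.exp_pos _).le]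
        exact le_trans (mul_le_mul_right step2 _) step1
      refine le_trans (ENNReal.ofReal_le_ofReal ?_) hmain
      have he : Real.exp (-(2*ρ₀^(2*α))) ≤ Real.exp (-(2*t) * ρ^(2*α)) := by
        rw [Real.exp_le_exp, hk1]
        have h2 : (0:ℝ) < ρ₀ ^ (2*α) := Real.rpow_pos_of_pos hρ₀ _
        have h3 : t * (1+t)⁻¹ ≤ 1 := by
          rw [← div_eq_mul_inv, div_le_one h1t]; linarith
        have h4 : (0:ℝ) < (1+t)⁻¹ := inv_pos.mpr h1t
        nlinarith
      calc creal * ρ₀ ^ β * Real.exp (-(2 * ρ₀ ^ (2*α))) * (1+t)^(-κ)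
          = Real.exp (-(2*ρ₀^(2*α))) * (creal * (ρ₀^β * (1+t)^(-κ))) := by ring
        _ ≤ Real.exp (-(2*t) * ρ^(2*α)) * (creal * (ρ₀^β * (1+t)^(-κ))) := by
            refine mul_le_mul_of_nonneg_right he ?_
            have : (0:ℝ) ≤ (1+t)^(-κ) := Real.rpow_nonneg h1t.le _
            positivity
        _ = Real.exp (-(2*t) * ρ^(2*α)) * (creal * ρ^β) := by rw [hk2]
    · rcases le_or_gt t 1 with hle | hgt
      · refine le_trans (S5.Eup_triv n α hg_meas ht) (le_trans hMeq.le ?_)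
        refine ENNReal.ofReal_le_ofReal ?_
        have hbase : (2:ℝ)^(-κ) ≤ (1+t)^(-κ) :=
          Real.rpow_le_rpow_of_nonpos h1t (by linarith) (by linarith)
        have h2κ : (0:ℝ) < 2^κ := Real.rpow_pos_of_pos two_pos _
        have hinv : (2:ℝ)^κ * 2^(-κ) = 1 := by
          rw [← Real.rpow_add two_pos]; simp
        calc Mreal = (Mreal * 2^κ) * 2^(-κ) := by
              rw [mul_assoc, hinv, mul_one]
          _ ≤ (Mreal * 2^κ) * (1+t)^(-κ) := by
              refine mul_le_mul_of_nonneg_left hbase ?_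
              positivity
          _ ≤ max (CF * Real.Gamma (κ+1)) (Mreal * 2 ^ κ) * (1+t)^(-κ) :=
              mul_le_mul_of_nonneg_right (le_max_right _ _) (Real.rpow_nonneg h1t.le _)
      · refine le_trans (hEub t (by linarith)) (ENNReal.ofReal_le_ofReal ?_)
        have hbase : (2*t)^(-κ) ≤ (1+t)^(-κ) :=
          Real.rpow_le_rpow_of_nonpos h1t (by linarith) (by linarith)
        calc CF * Real.Gamma (κ+1) * (2*t)^(-κ)
            ≤ CF * Real.Gamma (κ+1) * (1+t)^(-κ) := by
              refine mul_le_mul_of_nonneg_left hbase ?_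
              positivity
          _ ≤ max (CF * Real.Gamma (κ+1)) (Mreal * 2 ^ κ) * (1+t)^(-κ) :=
              mul_le_mul_of_nonneg_right (le_max_left _ _) (Real.rpow_nonneg h1t.le _)

  · rintro ⟨C₁, C₂, hC₁, hC₂, hbound⟩
    have hbound' : ∀ t : ℝ, 0 ≤ t →
        ENNReal.ofReal (C₁ * (1 + t) ^ (-κ)) ≤ Ealpha n g α t ∧
        Ealpha n g α t ≤ ENNReal.ofReal (C₂ * (1 + t) ^ (-κ)) := by
      intro t ht
      have := hbound t ht
      rwa [hexpeq] at this
    have hIoc : Set.Ioc (0:ℝ) 1 ∈ 𝓝[>] (0:ℝ) :=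
      mem_nhdsGT_iff_exists_Ioc_subset.mpr ⟨1, Set.mem_Ioi.mpr one_pos, subset_rfl⟩
    constructor
    · -- 0 < Pminus
      set A : ℝ := |Real.log (C₂ * 2^κ * 2 / C₁)| + 1 with hAdef
      have hApos : 0 < A := by
        have := abs_nonneg (Real.log (C₂ * 2^κ * 2 / C₁))
        rw [hAdef]; linarith
      have h2κpos : (0:ℝ) < 2^κ := Real.rpow_pos_of_pos two_pos _
      have hAb : C₂ * 2^κ * Real.exp (-A) ≤ C₁/2 := by
        have hxpos : (0:ℝ) < C₂ * 2^κ * 2 / C₁ := by positivity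
        have h1 : Real.log (C₂*2^κ*2/C₁) ≤ A := by
          rw [hAdef]
          have := le_abs_self (Real.log (C₂ * 2^κ * 2 / C₁))
          linarith
        have h2 : Real.exp (-A) ≤ (C₂*2^κ*2/C₁)⁻¹ := by
          rw [← Real.exp_log hxpos, ← Real.exp_neg, Real.exp_le_exp]
          linarith
        have h3 : C₂*2^κ*(C₂*2^κ*2/C₁)⁻¹ = C₁/2 := by
          field_simp
        calc C₂ * 2^κ * Real.exp (-A) ≤ C₂*2^κ*(C₂*2^κ*2/C₁)⁻¹ :=
              mul_le_mul_of_nonneg_left h2 (by positivity)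
          _ = C₁/2 := h3
      set c' : ℝ := C₁/2 * (1+A)^(-κ) with hc'def
      have hc'pos : 0 < c' := by
        have : (0:ℝ) < (1+A)^(-κ) := Real.rpow_pos_of_pos (by linarith) _
        rw [hc'def]; positivity
      have hev : ∀ᶠ ρ in 𝓝[>] (0:ℝ), ENNReal.ofReal c' ≤ decayFun n g rstar ρ := by
        refine Filter.eventually_of_mem hIoc fun ρ hρ => ?_
        obtain ⟨hρpos, hρ1⟩ := hρ
        set t : ℝ := (A/2) * ρ^(-(2*α)) with htdef
        have hrinv : (0:ℝ) < ρ^(-(2*α)) := Real.rpow_pos_of_pos hρpos _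
        have htpos : 0 < t := by rw [htdef]; positivity
        have hcancel : ρ^(-(2*α)) * ρ^(2*α) = 1 := by
          rw [← Real.rpow_add hρpos]; simp
        have h2trho : 2*t*ρ^(2*α) = A := by
          rw [htdef]
          nlinarith [hcancel]
        have hsplit := S5.Esplit n α hg_meas hα htpos.le hρpos
        have hexparg : -(2*t) * ρ^(2*α) = -A := by nlinarith [h2trho]
        rw [hexparg] at hsplit
        have hlow2 := (hbound' (2*t) (by linarith)).1
        have hup1 := (hbound' t htpos.le).2
        have htail : ENNReal.ofReal (Real.exp (-A)) * Ealpha n g α t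
            ≤ ENNReal.ofReal (Real.exp (-A) * (C₂ * (1+t)^(-κ))) := by
          rw [ENNReal.ofReal_mul (Real.exp_pos _).le]
          exact mul_le_mul_right hup1 _
        have hF : ENNReal.ofReal (C₁ * (1+2*t)^(-κ) - Real.exp (-A) * (C₂ * (1+t)^(-κ)))
            ≤ S5.mu n g {ξ : EuclideanSpace ℝ (Fin n) | ‖ξ‖ ≤ ρ} := by
          rw [ENNReal.ofReal_sub _ (by positivity)]
          refine le_trans (tsub_le_tsub hlow2 htail) ?_
          exact tsub_le_iff_right.mpr hsplit
        have hreal : c' * ρ^β ≤ C₁ * (1+2*t)^(-κ) - Real.exp (-A) * (C₂ * (1+t)^(-κ)) := by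
          have h12t : (0:ℝ) < 1 + 2*t := by linarith
          have h1t : (0:ℝ) < 1 + t := by linarith
          -- (1+t)^(-κ) ≤ 2^κ * (1+2t)^(-κ)
          have hs1 : (2*(1+t))^(-κ) ≤ (1+2*t)^(-κ) :=
            Real.rpow_le_rpow_of_nonpos h12t (by linarith) (by linarith)
          have hs2 : (2*(1+t))^(-κ) = 2^(-κ) * (1+t)^(-κ) :=
            Real.mul_rpow (by norm_num) h1t.le
          have hinv2 : (2:ℝ)^κ * 2^(-κ) = 1 := by
            rw [← Real.rpow_add two_pos]; simp
          have hs3 : (1+t)^(-κ) ≤ 2^κ * (1+2*t)^(-κ) := by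
            have := mul_le_mul_of_nonneg_left (hs2 ▸ hs1) h2κpos.le
            calc (1+t)^(-κ) = 2^κ * (2^(-κ) * (1+t)^(-κ)) := by
                  rw [← mul_assoc, hinv2, one_mul]
              _ ≤ 2^κ * (1+2*t)^(-κ) := this
          -- tail term bound
          have hs4 : Real.exp (-A) * (C₂ * (1+t)^(-κ)) ≤ C₁/2 * (1+2*t)^(-κ) := by
            have h5 : (0:ℝ) ≤ (1+2*t)^(-κ) := Real.rpow_nonneg h12t.le _
            calc Real.exp (-A) * (C₂ * (1+t)^(-κ))
                ≤ Real.exp (-A) * (C₂ * (2^κ * (1+2*t)^(-κ))) := by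
                  refine mul_le_mul_of_nonneg_left ?_ (Real.exp_pos _).le
                  exact mul_le_mul_of_nonneg_left hs3 hC₂.le
              _ = (C₂ * 2^κ * Real.exp (-A)) * (1+2*t)^(-κ) := by ring
              _ ≤ C₁/2 * (1+2*t)^(-κ) := mul_le_mul_of_nonneg_right hAb h5
          -- (1+2t)^(-κ) ≥ (1+A)^(-κ) * ρ^β
          have hr1 : (1:ℝ) ≤ ρ^(-(2*α)) := by
            have := Real.rpow_le_rpow_of_exponent_ge hρpos hρ1
              (show -(2*α) ≤ 0 by linarith)
            simpa using this
          have hs5 : 1 + 2*t ≤ (1+A) * ρ^(-(2*α)) := by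
            rw [htdef]
            nlinarith
          have hs6 : ((1+A) * ρ^(-(2*α)))^(-κ) ≤ (1+2*t)^(-κ) :=
            Real.rpow_le_rpow_of_nonpos h12t hs5 (by linarith)
          have hs7 : ((1+A) * ρ^(-(2*α)))^(-κ) = (1+A)^(-κ) * ρ^β := by
            rw [Real.mul_rpow (by linarith : (0:ℝ) ≤ 1+A) hrinv.le,
              ← Real.rpow_mul hρpos.le]
            congr 1
            rw [show -(2*α) * -κ = 2*α*κ by ring, h2ακ]
          have hs8 : (1+A)^(-κ) * ρ^β ≤ (1+2*t)^(-κ) := by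
            rw [← hs7]; exact hs6
          have hρβ : (0:ℝ) ≤ ρ^β := Real.rpow_nonneg hρpos.le _
          calc c' * ρ^β = C₁/2 * ((1+A)^(-κ) * ρ^β) := by rw [hc'def]; ring
            _ ≤ C₁/2 * (1+2*t)^(-κ) := mul_le_mul_of_nonneg_left hs8 (by positivity)
            _ ≤ C₁ * (1+2*t)^(-κ) - Real.exp (-A) * (C₂ * (1+t)^(-κ)) := by
                have h5 : (0:ℝ) ≤ (1+2*t)^(-κ) := Real.rpow_nonneg h12t.le _
                nlinarith [hs4]
        have : ENNReal.ofReal (c' * ρ^β) ≤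
            S5.mu n g {ξ : EuclideanSpace ℝ (Fin n) | ‖ξ‖ ≤ ρ} :=
          le_trans (ENNReal.ofReal_le_ofReal hreal) hF
        refine (hdec_ge_iff ρ hρpos _).mpr ?_
        rwa [← ENNReal.ofReal_mul hc'pos.le]
      have : ENNReal.ofReal c' ≤ Pminus n g rstar := le_liminf_of_le (by isBoundedDefault) hev
      exact lt_of_lt_of_le (ENNReal.ofReal_pos.mpr hc'pos) this
    · -- Pplus < ⊤
      have hev : ∀ᶠ ρ in 𝓝[>] (0:ℝ),
          decayFun n g rstar ρ ≤ ENNReal.ofReal (Real.exp 2 * C₂) := by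
        refine Filter.eventually_of_mem hIoc fun ρ hρ => ?_
        obtain ⟨hρpos, hρ1⟩ := hρ
        set t : ℝ := ρ^(-(2*α)) with htdef
        have htpos : 0 < t := Real.rpow_pos_of_pos hρpos _
        have hcancel : ρ^(-(2*α)) * ρ^(2*α) = 1 := by
          rw [← Real.rpow_add hρpos]; simp
        have hexparg : -(2*t) * ρ^(2*α) = -2 := by
          rw [htdef]; nlinarith [hcancel]
        have helb := S5.Elb n α hg_meas hα htpos.le hρpos
        rw [hexparg] at helb
        have hF : S5.mu n g {ξ : EuclideanSpace ℝ (Fin n) | ‖ξ‖ ≤ ρ}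
            ≤ ENNReal.ofReal (Real.exp 2) * Ealpha n g α t := by
          have hee : (1:ℝ≥0∞) = ENNReal.ofReal (Real.exp 2) * ENNReal.ofReal (Real.exp (-2)) := by
            rw [← ENNReal.ofReal_mul (Real.exp_pos _).le, ← Real.exp_add]
            norm_num
          calc S5.mu n g {ξ : EuclideanSpace ℝ (Fin n) | ‖ξ‖ ≤ ρ}
              = ENNReal.ofReal (Real.exp 2) * (ENNReal.ofReal (Real.exp (-2)) *
                  S5.mu n g {ξ : EuclideanSpace ℝ (Fin n) | ‖ξ‖ ≤ ρ}) := by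
                rw [← mul_assoc, ← hee, one_mul]
            _ ≤ ENNReal.ofReal (Real.exp 2) * Ealpha n g α t := mul_le_mul_right helb _
        have hup := (hbound' t htpos.le).2
        have hEt : Ealpha n g α t ≤ ENNReal.ofReal (C₂ * ρ^β) := by
          refine le_trans hup (ENNReal.ofReal_le_ofReal ?_)
          have h1t : (0:ℝ) < 1 + t := by linarith
          have hs6 : (1+t)^(-κ) ≤ (ρ^(-(2*α)))^(-κ) := by
            refine Real.rpow_le_rpow_of_nonpos htpos ?_ (by linarith)
            rw [htdef]; linarith
          have hs7 : (ρ^(-(2*α)))^(-κ) = ρ^β := by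
            rw [← Real.rpow_mul hρpos.le]
            congr 1
            rw [show -(2*α) * -κ = 2*α*κ by ring, h2ακ]
          refine mul_le_mul_of_nonneg_left ?_ hC₂.le
          rw [← hs7]; exact hs6
        refine (hdec_le_iff ρ hρpos _).mpr ?_
        calc S5.mu n g {ξ : EuclideanSpace ℝ (Fin n) | ‖ξ‖ ≤ ρ}
            ≤ ENNReal.ofReal (Real.exp 2) * Ealpha n g α t := hF
          _ ≤ ENNReal.ofReal (Real.exp 2) * ENNReal.ofReal (C₂ * ρ^β) :=
              mul_le_mul_right hEt _
          _ = ENNReal.ofReal (Real.exp 2 * C₂) * ENNReal.ofReal (ρ^β) := by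
              rw [← ENNReal.ofReal_mul (Real.exp_pos _).le,
                ← ENNReal.ofReal_mul (by positivity : (0:ℝ) ≤ Real.exp 2 * C₂)]
              congr 1
              ring
      have hle : Pplus n g rstar ≤ ENNReal.ofReal (Real.exp 2 * C₂) :=
        limsup_le_of_le (by isBoundedDefault) hev
      exact lt_of_le_of_lt hle ENNReal.ofReal_lt_top
end
end

section
/- Let n ≥ 1, σ > 0, and let g : ℝⁿ → ℂ be measurable. Then g satisfies the weak A-condition with exponent 2σ if and only if both: sup_{t>0} t^{2σ} ∫_{ℝⁿ} e^{−2t|ξ|²} |g(ξ)|² dξ < ∞, and liminf_{t→+∞} t^{2σ} ∫_{ℝⁿ} e^{−2t|ξ|²} |g(ξ)|² dξ > 0. By Plancherel the integral equals ‖e^{tΔ}f‖_{L²}² for the tempered distribution f with Fourier transform g, so this characterizes the set 𝒜^{−2σ}_{2,∞} by the conditions t^σ‖e^{tΔ}f‖₂ ∈ L^∞(ℝ⁺) and liminf_{t→∞} t^σ‖e^{tΔ}f‖₂ > 0. -/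
open MeasureTheory Filter Topology
open scoped ENNReal NNReal

noncomputable section

/-- Sharp Littlewood–Paley block: `a_j(g) = (∫_{2^j ≤ |ξ| < 2^{j+1}} |g(ξ)|² dξ)^{1/2}`. -/
def ajBlock (n : ℕ) (g : EuclideanSpace ℝ (Fin n) → ℂ) (j : ℤ) : ℝ≥0∞ :=
  (∫⁻ ξ in {ξ : EuclideanSpace ℝ (Fin n) |
      (2 : ℝ) ^ (j : ℝ) ≤ ‖ξ‖ ∧ ‖ξ‖ < (2 : ℝ) ^ ((j : ℝ) + 1)},
    ENNReal.ofReal (‖g ξ‖ ^ 2)) ^ (1 / 2 : ℝ)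

/-- The strong A-condition with exponent `σ`: the Fourier-side description of `Ȧ^{-σ}_{2,∞}`. -/
def StrongACond (n : ℕ) (g : EuclideanSpace ℝ (Fin n) → ℂ) (σ : ℝ) : Prop :=
  ∃ c C : ℝ, 0 < c ∧ 0 < C ∧ ∃ M : ℕ, 0 < M ∧
    (∀ j : ℤ, ajBlock n g j ≤ ENNReal.ofReal (C * (2 : ℝ) ^ (σ * (j : ℝ)))) ∧
    (∀ j₀ : ℤ, ∃ j : ℤ, j₀ ≤ j ∧ j < j₀ + M ∧
      ENNReal.ofReal (c * (2 : ℝ) ^ (σ * (j : ℝ))) ≤ ajBlock n g j)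

/-- The weak A-condition with exponent `σ`: the Fourier-side description of `𝒜^{-σ}_{2,∞}`. -/
def WeakACond (n : ℕ) (g : EuclideanSpace ℝ (Fin n) → ℂ) (σ : ℝ) : Prop :=
  ∃ c C : ℝ, 0 < c ∧ 0 < C ∧ ∃ jk : ℕ → ℤ,
    Filter.Tendsto jk Filter.atTop Filter.atBot ∧
    (∃ M : ℕ, ∀ k : ℕ, |jk k - jk (k + 1)| ≤ M) ∧
    (∀ j : ℤ, ajBlock n g j ≤ ENNReal.ofReal (C * (2 : ℝ) ^ (σ * (j : ℝ)))) ∧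
    (∀ k : ℕ, ENNReal.ofReal (c * (2 : ℝ) ^ (σ * (jk k : ℝ))) ≤ ajBlock n g (jk k))

namespace S7


lemma hlpA (a : ℝ) (ha : 0 < a) (x y : ℝ) : (a ^ x) ^ y = a ^ (x*y) :=
  (Real.rpow_mul ha.le x y).symm

lemma hlpPow (a : ℝ) (ha : 0 < a) (x : ℝ) (k : ℕ) : (a ^ x) ^ k = a ^ (x*(k:ℝ)) := by
  rw [← Real.rpow_natCast (a^x) k, hlpA a ha]

lemma four_rpow (x : ℝ) : (4:ℝ) ^ x = ((2:ℝ) ^ x) ^ 2 := by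
  have h4 : (4:ℝ) = (2:ℝ)^(2:ℝ) := by
    rw [show (2:ℝ) = ((2:ℕ):ℝ) by norm_num, Real.rpow_natCast]; norm_num
  rw [h4, hlpA 2 two_pos, hlpPow 2 two_pos]; ring_nf

variable {n : ℕ} (g : EuclideanSpace ℝ (Fin n) → ℂ)

/-- dyadic annulus -/
def A (n : ℕ) (j : ℤ) : Set (EuclideanSpace ℝ (Fin n)) :=
  {ξ | (2 : ℝ) ^ (j : ℝ) ≤ ‖ξ‖ ∧ ‖ξ‖ < (2 : ℝ) ^ ((j : ℝ) + 1)}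

/-- squared block -/
def bj (n : ℕ) (g : EuclideanSpace ℝ (Fin n) → ℂ) (j : ℤ) : ℝ≥0∞ :=
  ∫⁻ ξ in A n j, ENNReal.ofReal (‖g ξ‖ ^ 2)

lemma ajBlock_eq (j : ℤ) : ajBlock n g j = bj n g j ^ (1/2 : ℝ) := rfl

lemma measA (j : ℤ) : MeasurableSet (A n j) := by
  have : A n j = (fun ξ : EuclideanSpace ℝ (Fin n) => ‖ξ‖) ⁻¹'
      (Set.Ico ((2:ℝ)^(j:ℝ)) ((2:ℝ)^((j:ℝ)+1))) := rfl
  rw [this]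
  exact measurable_norm measurableSet_Ico

lemma norm_sq_mem {j : ℤ} {ξ : EuclideanSpace ℝ (Fin n)} (hξ : ξ ∈ A n j) :
    (4:ℝ) ^ ((j:ℝ)) ≤ ‖ξ‖^2 ∧ ‖ξ‖^2 ≤ (4:ℝ) ^ ((j:ℝ)+1) := by
  obtain ⟨h1, h2⟩ := hξ
  have hp : (0:ℝ) ≤ (2:ℝ)^((j:ℝ)) := (Real.rpow_pos_of_pos two_pos _).le
  constructor
  · rw [four_rpow]
    exact pow_le_pow_left₀ hp h1 2
  · rw [four_rpow]
    exact pow_le_pow_left₀ (norm_nonneg _) h2.le 2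

lemma Ealpha_one (t : ℝ) : Ealpha n g 1 t =
    ∫⁻ ξ : EuclideanSpace ℝ (Fin n),
      ENNReal.ofReal (Real.exp (-(2 * t) * ‖ξ‖ ^ 2) * ‖g ξ‖ ^ 2) := by
  unfold Ealpha
  congr 1
  funext ξ
  rw [show (2*(1:ℝ)) = ((2:ℕ):ℝ) by norm_num, Real.rpow_natCast]

lemma E_lower {t : ℝ} (ht : 0 < t) (j : ℤ) :
    ENNReal.ofReal (Real.exp (-(2*t) * (4:ℝ)^((j:ℝ)+1))) * bj n g j ≤ Ealpha n g 1 t := by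
  rw [Ealpha_one]
  have step1 : ENNReal.ofReal (Real.exp (-(2*t) * (4:ℝ)^((j:ℝ)+1))) * bj n g j
      = ∫⁻ ξ in A n j, ENNReal.ofReal (Real.exp (-(2*t) * (4:ℝ)^((j:ℝ)+1))) *
          ENNReal.ofReal (‖g ξ‖ ^ 2) :=
    (lintegral_const_mul' _ _ ENNReal.ofReal_ne_top).symm
  rw [step1]
  calc ∫⁻ ξ in A n j, ENNReal.ofReal (Real.exp (-(2*t) * (4:ℝ)^((j:ℝ)+1))) *
          ENNReal.ofReal (‖g ξ‖ ^ 2)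
      ≤ ∫⁻ ξ in A n j, ENNReal.ofReal (Real.exp (-(2 * t) * ‖ξ‖ ^ 2) * ‖g ξ‖ ^ 2) := by
        apply setLIntegral_mono' (measA j)
        intro ξ hξ
        rw [← ENNReal.ofReal_mul (Real.exp_nonneg _)]
        apply ENNReal.ofReal_le_ofReal
        apply mul_le_mul_of_nonneg_right _ (sq_nonneg _)
        apply Real.exp_le_exp.mpr
        nlinarith [(norm_sq_mem (n := n) hξ).2]
    _ ≤ ∫⁻ ξ, ENNReal.ofReal (Real.exp (-(2 * t) * ‖ξ‖ ^ 2) * ‖g ξ‖ ^ 2) :=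
        setLIntegral_le_lintegral _ _

lemma E_upper (hn : 1 ≤ n) {t : ℝ} (ht : 0 < t) :
    Ealpha n g 1 t ≤ ∑' j : ℤ, ENNReal.ofReal (Real.exp (-(2*t) * (4:ℝ)^((j:ℝ)))) * bj n g j := by
  classical
  rw [Ealpha_one]
  set W : EuclideanSpace ℝ (Fin n) → ℝ≥0∞ :=
    fun ξ => ENNReal.ofReal (Real.exp (-(2 * t) * ‖ξ‖ ^ 2) * ‖g ξ‖ ^ 2) with hW
  set U : Set (EuclideanSpace ℝ (Fin n)) := ⋃ j : ℤ, A n j with hU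
  have hcover : ∀ ξ : EuclideanSpace ℝ (Fin n), ξ ≠ 0 → ξ ∈ U := by
    intro ξ hξ
    have hpos : 0 < ‖ξ‖ := norm_pos_iff.mpr hξ
    refine Set.mem_iUnion.mpr ⟨⌊Real.logb 2 ‖ξ‖⌋, ?_, ?_⟩
    · calc (2:ℝ) ^ ((⌊Real.logb 2 ‖ξ‖⌋ : ℤ) : ℝ) ≤ (2:ℝ) ^ (Real.logb 2 ‖ξ‖) :=
        Real.rpow_le_rpow_of_exponent_le one_le_two (Int.floor_le _)
      _ = ‖ξ‖ := Real.rpow_logb two_pos (by norm_num) hpos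
    · calc ‖ξ‖ = (2:ℝ) ^ (Real.logb 2 ‖ξ‖) := (Real.rpow_logb two_pos (by norm_num) hpos).symm
      _ < (2:ℝ) ^ (((⌊Real.logb 2 ‖ξ‖⌋ : ℤ) : ℝ) + 1) :=
        Real.rpow_lt_rpow_of_exponent_lt one_lt_two (Int.lt_floor_add_one _)
  haveI : Nontrivial (EuclideanSpace ℝ (Fin n)) := by
    haveI : Nonempty (Fin n) := ⟨⟨0, hn⟩⟩
    exact ⟨0, EuclideanSpace.single ⟨0, hn⟩ 1, by
      intro h
      have := congrArg (fun v : EuclideanSpace ℝ (Fin n) => v ⟨0, hn⟩) h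
      simp at this⟩
  have hzero : (volume : Measure (EuclideanSpace ℝ (Fin n))) {(0 : EuclideanSpace ℝ (Fin n))} = 0 :=
    measure_singleton _
  calc ∫⁻ ξ, W ξ = ∫⁻ ξ in Set.univ, W ξ := (setLIntegral_univ _).symm
    _ = ∫⁻ ξ in U ∪ Uᶜ, W ξ := by rw [Set.union_compl_self]
    _ ≤ (∫⁻ ξ in U, W ξ) + ∫⁻ ξ in Uᶜ, W ξ := lintegral_union_le _ _ _
    _ ≤ (∑' j : ℤ, ∫⁻ ξ in A n j, W ξ) + 0 := by
        apply add_le_add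
        · exact lintegral_iUnion_le _ _
        · have hsub : Uᶜ ⊆ {(0 : EuclideanSpace ℝ (Fin n))} := by
            intro ξ hξ
            by_contra hne
            exact hξ (hcover ξ hne)
          calc ∫⁻ ξ in Uᶜ, W ξ ≤ ∫⁻ ξ in {(0 : EuclideanSpace ℝ (Fin n))}, W ξ :=
              lintegral_mono_set hsub
          _ = 0 := by rw [setLIntegral_measure_zero _ _ hzero]
    _ ≤ ∑' j : ℤ, ENNReal.ofReal (Real.exp (-(2*t) * (4:ℝ)^((j:ℝ)))) * bj n g j := by
        rw [add_zero]
        apply ENNReal.tsum_le_tsum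
        intro j
        have : ∫⁻ ξ in A n j, W ξ ≤ ∫⁻ ξ in A n j,
            ENNReal.ofReal (Real.exp (-(2*t) * (4:ℝ)^((j:ℝ)))) * ENNReal.ofReal (‖g ξ‖ ^ 2) := by
          apply setLIntegral_mono' (measA j)
          intro ξ hξ
          rw [← ENNReal.ofReal_mul (Real.exp_nonneg _)]
          apply ENNReal.ofReal_le_ofReal
          apply mul_le_mul_of_nonneg_right _ (sq_nonneg _)
          apply Real.exp_le_exp.mpr
          nlinarith [(norm_sq_mem (n := n) hξ).1]
        calc ∫⁻ ξ in A n j, W ξ ≤ _ := this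
          _ = ENNReal.ofReal (Real.exp (-(2*t) * (4:ℝ)^((j:ℝ)))) * bj n g j :=
            lintegral_const_mul' _ _ ENNReal.ofReal_ne_top


lemma half_le_iff {x y : ℝ≥0∞} : x ^ (1/2 : ℝ) ≤ y ↔ x ≤ y ^ (2:ℝ) := by
  rw [← ENNReal.rpow_le_rpow_iff (z := (2:ℝ)) two_pos, ← ENNReal.rpow_mul]
  norm_num

lemma le_half_iff {x y : ℝ≥0∞} : y ≤ x ^ (1/2 : ℝ) ↔ y ^ (2:ℝ) ≤ x := by
  rw [← ENNReal.rpow_le_rpow_iff (z := (2:ℝ)) two_pos, ← ENNReal.rpow_mul]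
  norm_num

lemma ofReal_sq (a : ℝ) (ha : 0 ≤ a) : (ENNReal.ofReal a) ^ (2:ℝ) = ENNReal.ofReal (a^2) := by
  rw [show (2:ℝ) = ((2:ℕ):ℝ) by norm_num, ENNReal.rpow_natCast, ENNReal.ofReal_pow ha]

lemma nat_le_four_pow (k : ℕ) : (k:ℝ)+1 ≤ 4^k := by
  induction k with
  | zero => norm_num
  | succ m ih =>
    have h4 : (4:ℝ)^(m+1) = 4*4^m := by ring
    have := one_le_pow₀ (show (1:ℝ) ≤ 4 by norm_num) (n := m)
    push_cast
    nlinarith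

lemma rpow_le_exp_aux (r : ℝ) (hr : 0 ≤ r) : ∃ CR : ℝ, 1 ≤ CR ∧ ∀ u : ℝ, 0 ≤ u → u ^ r ≤ CR * Real.exp u := by
  set N : ℕ := ⌈r⌉₊ + 1 with hN
  refine ⟨(N:ℝ)^N + 1, le_add_of_nonneg_left (by positivity), fun u hu => ?_⟩
  have hNpos : (0:ℝ) < N := by positivity
  rcases le_or_gt u 1 with h1 | h1
  · have : u ^ r ≤ 1 := Real.rpow_le_one hu h1 hr
    nlinarith [Real.exp_pos u, Real.one_le_exp hu, pow_pos hNpos N]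
  · have hrN : r ≤ (N:ℕ) := by
      have := Nat.le_ceil r
      push_cast [hN]; push_cast at this; linarith
    have h2 : u ^ r ≤ u ^ (N:ℝ) := Real.rpow_le_rpow_of_exponent_le h1.le hrN
    have h3 : u ≤ N * Real.exp (u / N) := by
      have := Real.add_one_le_exp (u / N)
      have h4 : u / N ≤ Real.exp (u/N) := by nlinarith [div_nonneg (le_of_lt (lt_trans one_pos h1)) hNpos.le]
      calc u = N * (u / N) := by field_simp
        _ ≤ N * Real.exp (u / N) := by nlinarith
    have h5 : u ^ (N:ℕ) ≤ (N * Real.exp (u/N)) ^ (N:ℕ) :=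
      pow_le_pow_left₀ (by linarith) h3 N
    have h6 : (N * Real.exp (u/N)) ^ (N:ℕ) = (N:ℝ)^N * Real.exp u := by
      rw [mul_pow, ← Real.exp_nat_mul]
      congr 2
      field_simp
    rw [Real.rpow_natCast] at h2
    nlinarith [Real.exp_pos u]


lemma tsum_tail_high (j₁ : ℤ) (c x : ℝ) (hc : 0 ≤ c) (hx : 0 ≤ x) (f : ℤ → ℝ≥0∞)
    (hb : ∀ j, j₁ < j → f j ≤ ENNReal.ofReal (c * x ^ (j - j₁ - 1).toNat))
    (h0 : ∀ j, j ≤ j₁ → f j = 0) :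
    ∑' j : ℤ, f j ≤ ENNReal.ofReal c * (1 - ENNReal.ofReal x)⁻¹ := by
  have hinj : Function.Injective (fun k : ℕ => j₁ + 1 + (k:ℤ)) := by
    intro a b h; simpa using h
  have hsupp : Function.support f ⊆ Set.range (fun k : ℕ => j₁ + 1 + (k:ℤ)) := by
    intro j hj
    rcases le_or_gt j j₁ with h | h
    · exact absurd (h0 j h) hj
    · exact ⟨(j - j₁ - 1).toNat, by simp; omega⟩
  rw [← Function.Injective.tsum_eq hinj hsupp]
  calc ∑' k : ℕ, f (j₁ + 1 + k) ≤ ∑' k : ℕ, ENNReal.ofReal c * (ENNReal.ofReal x) ^ k := by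
        apply ENNReal.tsum_le_tsum
        intro k
        have := hb (j₁ + 1 + k) (by omega)
        rw [show (j₁+1+(k:ℤ)-j₁-1).toNat = k by omega] at this
        calc f (j₁+1+(k:ℤ)) ≤ ENNReal.ofReal (c * x ^ k) := this
          _ = ENNReal.ofReal c * (ENNReal.ofReal x) ^ k := by
            rw [ENNReal.ofReal_mul hc, ENNReal.ofReal_pow hx]
    _ = ENNReal.ofReal c * (1 - ENNReal.ofReal x)⁻¹ := by
        rw [ENNReal.tsum_mul_left, ENNReal.tsum_geometric]

lemma tsum_tail_low (j₁ : ℤ) (c x : ℝ) (hc : 0 ≤ c) (hx : 0 ≤ x) (f : ℤ → ℝ≥0∞)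
    (hb : ∀ j, j < j₁ → f j ≤ ENNReal.ofReal (c * x ^ (j₁ - 1 - j).toNat))
    (h0 : ∀ j, j₁ ≤ j → f j = 0) :
    ∑' j : ℤ, f j ≤ ENNReal.ofReal c * (1 - ENNReal.ofReal x)⁻¹ := by
  have hinj : Function.Injective (fun k : ℕ => j₁ - 1 - (k:ℤ)) := by
    intro a b h; simp at h; omega
  have hsupp : Function.support f ⊆ Set.range (fun k : ℕ => j₁ - 1 - (k:ℤ)) := by
    intro j hj
    rcases le_or_gt j₁ j with h | h
    · exact absurd (h0 j h) hj
    · exact ⟨(j₁ - 1 - j).toNat, by simp; omega⟩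
  rw [← Function.Injective.tsum_eq hinj hsupp]
  calc ∑' k : ℕ, f (j₁ - 1 - k) ≤ ∑' k : ℕ, ENNReal.ofReal c * (ENNReal.ofReal x) ^ k := by
        apply ENNReal.tsum_le_tsum
        intro k
        have := hb (j₁ - 1 - k) (by omega)
        rw [show (j₁-1-(j₁-1-(k:ℤ))).toNat = k by omega] at this
        calc f (j₁-1-(k:ℤ)) ≤ ENNReal.ofReal (c * x ^ k) := this
          _ = ENNReal.ofReal c * (ENNReal.ofReal x) ^ k := by
            rw [ENNReal.ofReal_mul hc, ENNReal.ofReal_pow hx]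
    _ = ENNReal.ofReal c * (1 - ENNReal.ofReal x)⁻¹ := by
        rw [ENNReal.tsum_mul_left, ENNReal.tsum_geometric]

lemma tsum_mid (lo hi : ℤ) (c : ℝ≥0∞) (f : ℤ → ℝ≥0∞)
    (h0 : ∀ j, j < lo ∨ hi < j → f j = 0) (hb : ∀ j, f j ≤ c) :
    ∑' j : ℤ, f j ≤ ((hi + 1 - lo).toNat : ℝ≥0∞) * c := by
  rw [tsum_eq_sum (s := Finset.Icc lo hi) (fun j hj => h0 j (by
    simp [Finset.mem_Icc] at hj; omega))]
  calc ∑ j ∈ Finset.Icc lo hi, f j ≤ (Finset.Icc lo hi).card • c :=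
      Finset.sum_le_card_nsmul _ _ _ (fun j _ => hb j)
    _ = ((hi + 1 - lo).toNat : ℝ≥0∞) * c := by
      rw [Int.card_Icc, nsmul_eq_mul]

lemma inv_one_sub_ofReal_lt_top {x : ℝ} (hx : x < 1) : (1 - ENNReal.ofReal x)⁻¹ < ⊤ := by
  rw [ENNReal.inv_lt_top]
  rcases le_or_gt x 0 with h | h
  · simp [ENNReal.ofReal_eq_zero.mpr h]
  · have : ENNReal.ofReal x < 1 := by
      rw [← ENNReal.ofReal_one]
      exact ENNReal.ofReal_lt_ofReal_iff_of_nonneg h.le |>.mpr hx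
    exact tsub_pos_of_lt this


lemma four_pos : (0:ℝ) < 4 := by norm_num

lemma inv_pow_rpow (r : ℝ) (k : ℕ) : ((4:ℝ)^(-r)) ^ k = (4:ℝ) ^ (-(r*(k:ℝ))) := by
  rw [hlpPow 4 four_pos (-r) k]
  congr 1
  ring

lemma sup_bound (hn : 1 ≤ n) {r : ℝ} (hr : 0 < r) {C₂ : ℝ} (hC₂ : 0 ≤ C₂)
    (hb : ∀ j : ℤ, bj n g j ≤ ENNReal.ofReal (C₂ * (4:ℝ) ^ (r * (j:ℝ)))) :
    ∃ K : ℝ, ∀ t : ℝ, 0 < t → ENNReal.ofReal (t ^ r) * Ealpha n g 1 t ≤ ENNReal.ofReal K := by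
  obtain ⟨CR, hCR1, hCR⟩ := rpow_le_exp_aux r hr.le
  set y : ℝ := (4:ℝ)^(-r) with hy
  have hy0 : 0 < y := Real.rpow_pos_of_pos four_pos _
  have hy1 : y < 1 := Real.rpow_lt_one_of_one_lt_of_neg (by norm_num) (by linarith)
  have he1 : Real.exp (-1) < 1 := Real.exp_lt_one_iff.mpr (by norm_num)
  set X : ℝ≥0∞ := ENNReal.ofReal (C₂ * (4:ℝ)^r) * (1 - ENNReal.ofReal y)⁻¹ +
    ENNReal.ofReal (C₂ * CR * Real.exp (-1)) * (1 - ENNReal.ofReal (Real.exp (-1)))⁻¹ with hX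
  have hXt : X ≠ ⊤ := by
    apply ENNReal.add_ne_top.mpr
    constructor
    · exact ENNReal.mul_ne_top ENNReal.ofReal_ne_top (inv_one_sub_ofReal_lt_top hy1).ne
    · exact ENNReal.mul_ne_top ENNReal.ofReal_ne_top (inv_one_sub_ofReal_lt_top he1).ne
  refine ⟨X.toReal, fun t ht => ?_⟩
  rw [ENNReal.ofReal_toReal hXt]
  set j₀ : ℤ := -⌊Real.logb 4 t⌋ with hj₀
  set s : ℝ := t * (4:ℝ)^((j₀:ℝ)) with hs
  have hspos : 0 < s := mul_pos ht (Real.rpow_pos_of_pos four_pos _)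
  have hs1 : 1 ≤ s := by
    have h1 : (4:ℝ)^(-Real.logb 4 t) ≤ (4:ℝ)^((j₀:ℝ)) := by
      apply Real.rpow_le_rpow_of_exponent_le (by norm_num)
      push_cast [hj₀]
      linarith [Int.floor_le (Real.logb 4 t)]
    have h2 : (4:ℝ)^(-Real.logb 4 t) = t⁻¹ := by
      rw [Real.rpow_neg (by norm_num), Real.rpow_logb four_pos (by norm_num) ht]
    calc (1:ℝ) = t * t⁻¹ := (mul_inv_cancel₀ ht.ne').symm
      _ ≤ s := by rw [hs, ← h2]; exact mul_le_mul_of_nonneg_left h1 ht.le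
  have hs4 : s < 4 := by
    have h1 : (4:ℝ)^((j₀:ℝ)) < (4:ℝ)^(1-Real.logb 4 t) := by
      apply Real.rpow_lt_rpow_of_exponent_lt (by norm_num)
      push_cast [hj₀]
      linarith [Int.lt_floor_add_one (Real.logb 4 t)]
    have h2 : (4:ℝ)^(1-Real.logb 4 t) = 4 * t⁻¹ := by
      rw [Real.rpow_sub four_pos, Real.rpow_one, Real.rpow_logb four_pos (by norm_num) ht]
      field_simp
    calc s < t * (4 * t⁻¹) := by
          rw [hs, ← h2]; exact mul_lt_mul_of_pos_left h1 ht
      _ = 4 := by field_simp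
  have hkey : ∀ j : ℤ, t * (4:ℝ)^((j:ℝ)) = s * (4:ℝ)^((j:ℝ) - (j₀:ℝ)) := by
    intro j
    rw [hs, mul_assoc, ← Real.rpow_add four_pos]
    congr 2
    ring
  set flo : ℤ → ℝ≥0∞ := fun j =>
    if j ≤ j₀ then ENNReal.ofReal (C₂ * (4:ℝ)^r * y ^ (j₀ - j).toNat) else 0 with hflo
  set fhi : ℤ → ℝ≥0∞ := fun j =>
    if j₀ < j then ENNReal.ofReal ((C₂ * CR * Real.exp (-1)) * Real.exp (-1) ^ (j - j₀ - 1).toNat)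
    else 0 with hfhi
  have hpt : ∀ j : ℤ, ENNReal.ofReal (t^r) *
      (ENNReal.ofReal (Real.exp (-(2*t) * (4:ℝ)^((j:ℝ)))) * bj n g j) ≤ flo j + fhi j := by
    intro j
    set u : ℝ := t * (4:ℝ)^((j:ℝ)) with hu
    have hupos : 0 < u := mul_pos ht (Real.rpow_pos_of_pos four_pos _)
    have step1 : ENNReal.ofReal (t^r) *
        (ENNReal.ofReal (Real.exp (-(2*t) * (4:ℝ)^((j:ℝ)))) * bj n g j) ≤
        ENNReal.ofReal (C₂ * (u ^ r * Real.exp (-(2*u)))) := by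
      calc ENNReal.ofReal (t^r) *
          (ENNReal.ofReal (Real.exp (-(2*t) * (4:ℝ)^((j:ℝ)))) * bj n g j)
          ≤ ENNReal.ofReal (t^r) * (ENNReal.ofReal (Real.exp (-(2*t) * (4:ℝ)^((j:ℝ)))) *
            ENNReal.ofReal (C₂ * (4:ℝ) ^ (r * (j:ℝ)))) := by
            gcongr
            exact hb j
        _ = ENNReal.ofReal (t^r * (Real.exp (-(2*t) * (4:ℝ)^((j:ℝ))) *
            (C₂ * (4:ℝ) ^ (r * (j:ℝ))))) := by
            rw [← ENNReal.ofReal_mul (Real.exp_nonneg _), ← ENNReal.ofReal_mul (Real.rpow_nonneg ht.le r)]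
        _ = ENNReal.ofReal (C₂ * (u ^ r * Real.exp (-(2*u)))) := by
            congr 1
            have h1 : (4:ℝ) ^ (r * (j:ℝ)) = ((4:ℝ)^((j:ℝ)))^r := by
              rw [hlpA 4 four_pos]; congr 1; ring
            have h2 : u ^ r = t^r * ((4:ℝ)^((j:ℝ)))^r := by
              rw [hu, Real.mul_rpow ht.le (Real.rpow_pos_of_pos four_pos _).le]
            rw [h1, h2]
            have h3 : -(2*t) * (4:ℝ)^((j:ℝ)) = -(2*u) := by rw [hu]; ring
            rw [h3]
            ring
    refine le_trans step1 ?_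
    rcases le_or_gt j j₀ with hcase | hcase
    · have hk' : (((j₀ - j).toNat : ℤ)) = j₀ - j := Int.toNat_of_nonneg (by omega)
      have hk : (j₀:ℝ) - (j:ℝ) = ((j₀ - j).toNat : ℝ) := by
        have h := congrArg (fun z : ℤ => (z:ℝ)) hk'
        push_cast at h
        linarith
      have hub : u ≤ 4 * (4:ℝ)^((j:ℝ)-(j₀:ℝ)) := by
        rw [hu, hkey j]
        exact mul_le_mul_of_nonneg_right hs4.le (Real.rpow_pos_of_pos four_pos _).le
      have hur : u ^ r ≤ (4:ℝ)^r * y ^ (j₀ - j).toNat := by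
        calc u ^ r ≤ (4 * (4:ℝ)^((j:ℝ)-(j₀:ℝ))) ^ r :=
            Real.rpow_le_rpow hupos.le hub hr.le
          _ = (4:ℝ)^r * ((4:ℝ)^((j:ℝ)-(j₀:ℝ)))^r :=
            Real.mul_rpow (by norm_num) (Real.rpow_pos_of_pos four_pos _).le
          _ = (4:ℝ)^r * y ^ (j₀ - j).toNat := by
            rw [inv_pow_rpow, hlpA 4 four_pos]
            congr 2
            rw [← hk]
            ring
      have hexp : Real.exp (-(2*u)) ≤ 1 := Real.exp_le_one_iff.mpr (by nlinarith)
      have h0 : 0 ≤ u ^ r := Real.rpow_nonneg hupos.le r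
      have hA : u ^ r * Real.exp (-(2*u)) ≤ u ^ r := mul_le_of_le_one_right h0 hexp
      have hB : C₂ * (u ^ r * Real.exp (-(2*u))) ≤ C₂ * ((4:ℝ)^r * y ^ (j₀ - j).toNat) :=
        mul_le_mul_of_nonneg_left (hA.trans hur) hC₂
      calc ENNReal.ofReal (C₂ * (u ^ r * Real.exp (-(2*u))))
          ≤ ENNReal.ofReal (C₂ * ((4:ℝ)^r * y ^ (j₀ - j).toNat)) := ENNReal.ofReal_le_ofReal hB
        _ = flo j := by rw [hflo]; simp only [hcase, if_true]; congr 1; ring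
        _ ≤ flo j + fhi j := le_self_add
    · set k : ℕ := (j - j₀ - 1).toNat with hkdef
      have hk' : ((k:ℤ)) = j - j₀ - 1 := Int.toNat_of_nonneg (by omega)
      have hk : (j:ℝ) - (j₀:ℝ) = (k:ℝ) + 1 := by
        have : (j:ℤ) - j₀ = (k:ℤ) + 1 := by omega
        exact_mod_cast congrArg (Int.cast : ℤ → ℝ) this
      have hu1 : ((k:ℝ)+1) ≤ u := by
        rw [hu, hkey j, hk]
        have h1 : (4:ℝ)^((k:ℝ)+1) = (4:ℝ)^(k+1 : ℕ) := by
          rw [← Real.rpow_natCast 4 (k+1)]; push_cast; ring_nf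
        have h2 : ((k:ℝ)+1)+1 ≤ (4:ℝ)^(k+1:ℕ) := by
          have := nat_le_four_pow (k+1); push_cast at this; linarith
        have h3 : (4:ℝ)^((k:ℝ)+1) ≤ s * (4:ℝ)^((k:ℝ)+1) :=
          le_mul_of_one_le_left (Real.rpow_pos_of_pos four_pos _).le hs1
        rw [h1] at h3 ⊢
        nlinarith
      have hC : u ^ r * Real.exp (-(2*u)) ≤ CR * Real.exp (-u) := by
        have h1 := hCR u hupos.le
        have h2 : u ^ r * Real.exp (-(2*u)) ≤ (CR * Real.exp u) * Real.exp (-(2*u)) :=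
          mul_le_mul_of_nonneg_right h1 (Real.exp_nonneg _)
        calc u ^ r * Real.exp (-(2*u)) ≤ (CR * Real.exp u) * Real.exp (-(2*u)) := h2
          _ = CR * Real.exp (-u) := by
            rw [mul_assoc, ← Real.exp_add]; ring_nf
      have hD : Real.exp (-u) ≤ Real.exp (-((k:ℝ)+1)) := Real.exp_le_exp.mpr (by linarith)
      have hE : Real.exp (-((k:ℝ)+1)) = Real.exp (-1) * Real.exp (-1) ^ k := by
        rw [← Real.exp_nat_mul, ← Real.exp_add]
        congr 1
        ring
      have hF : C₂ * (u ^ r * Real.exp (-(2*u))) ≤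
          (C₂ * CR * Real.exp (-1)) * Real.exp (-1) ^ k := by
        have : u ^ r * Real.exp (-(2*u)) ≤ CR * (Real.exp (-1) * Real.exp (-1) ^ k) := by
          calc u ^ r * Real.exp (-(2*u)) ≤ CR * Real.exp (-u) := hC
            _ ≤ CR * Real.exp (-((k:ℝ)+1)) :=
              mul_le_mul_of_nonneg_left hD (by linarith)
            _ = CR * (Real.exp (-1) * Real.exp (-1) ^ k) := by rw [hE]
        calc C₂ * (u ^ r * Real.exp (-(2*u)))
            ≤ C₂ * (CR * (Real.exp (-1) * Real.exp (-1) ^ k)) :=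
              mul_le_mul_of_nonneg_left this hC₂
          _ = (C₂ * CR * Real.exp (-1)) * Real.exp (-1) ^ k := by ring
      calc ENNReal.ofReal (C₂ * (u ^ r * Real.exp (-(2*u))))
          ≤ ENNReal.ofReal ((C₂ * CR * Real.exp (-1)) * Real.exp (-1) ^ k) :=
            ENNReal.ofReal_le_ofReal hF
        _ = fhi j := by rw [hfhi]; simp only [hcase, if_true]; rfl
        _ ≤ flo j + fhi j := le_add_self
  have hC2R : 0 ≤ C₂ * CR * Real.exp (-1) := by positivity
  calc ENNReal.ofReal (t^r) * Ealpha n g 1 t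
      ≤ ENNReal.ofReal (t^r) *
        ∑' j : ℤ, ENNReal.ofReal (Real.exp (-(2*t) * (4:ℝ)^((j:ℝ)))) * bj n g j := by
        gcongr
        exact E_upper g hn ht
    _ = ∑' j : ℤ, ENNReal.ofReal (t^r) *
        (ENNReal.ofReal (Real.exp (-(2*t) * (4:ℝ)^((j:ℝ)))) * bj n g j) :=
        ENNReal.tsum_mul_left.symm
    _ ≤ ∑' j : ℤ, (flo j + fhi j) := ENNReal.tsum_le_tsum hpt
    _ = (∑' j : ℤ, flo j) + ∑' j : ℤ, fhi j := ENNReal.tsum_add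
    _ ≤ X := by
        rw [hX]
        apply add_le_add
        · apply tsum_tail_low (j₀+1) (C₂*(4:ℝ)^r) y (by positivity) hy0.le flo
          · intro j hj
            rw [hflo]
            simp only [show j ≤ j₀ by omega, if_true]
            rw [show j₀ + 1 - 1 - j = j₀ - j by ring]
          · intro j hj
            rw [hflo]
            simp only [show ¬ (j ≤ j₀) by omega, if_false]
        · apply tsum_tail_high j₀ (C₂*CR*Real.exp (-1)) (Real.exp (-1)) hC2R (Real.exp_nonneg _) fhi
          · intro j hj
            rw [hfhi]
            simp only [hj, if_true]
            exact le_refl _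
          · intro j hj
            rw [hfhi]
            simp only [show ¬ (j₀ < j) by omega, if_false]

lemma window_hit (jk : ℕ → ℤ) (hj : Tendsto jk atTop atBot) (M : ℕ)
    (hM : ∀ k, |jk k - jk (k+1)| ≤ M) (a : ℤ) (ha : a ≤ jk 0) :
    ∃ k, a ≤ jk k ∧ jk k ≤ a + M := by
  classical
  obtain ⟨N, hN⟩ := (hj.eventually (eventually_le_atBot (a-1))).exists_forall_of_atTop
  set S := (Finset.range (N+1)).filter (fun k => a ≤ jk k) with hS
  have hne : S.Nonempty := ⟨0, by simp [hS, ha]⟩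
  set k0 := S.max' hne with hk0
  have hk0mem : k0 ∈ S := S.max'_mem hne
  have h1 : a ≤ jk k0 := by
    have := Finset.mem_filter.mp hk0mem
    exact this.2
  have h2 : jk (k0+1) ≤ a - 1 := by
    rcases le_or_gt N k0 with h | h
    · exact hN (k0+1) (by omega)
    · by_contra hcon
      push_neg at hcon
      have hmem : (k0+1) ∈ S := by
        simp only [hS, Finset.mem_filter, Finset.mem_range]
        exact ⟨by omega, by omega⟩
      have := S.le_max' (k0+1) hmem
      omega
  have h3 := hM k0
  rw [abs_le] at h3
  exact ⟨k0, h1, by omega⟩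

lemma liminf_lower (hn : 1 ≤ n) {r : ℝ} (hr : 0 < r) {c₂ : ℝ} (hc₂ : 0 < c₂)
    (jk : ℕ → ℤ) (hjk : Tendsto jk atTop atBot) (M : ℕ)
    (hM : ∀ k, |jk k - jk (k+1)| ≤ M)
    (hlow : ∀ k, ENNReal.ofReal (c₂ * (4:ℝ)^(r*((jk k : ℤ):ℝ))) ≤ bj n g (jk k)) :
    0 < liminf (fun t : ℝ => ENNReal.ofReal (t^r) * Ealpha n g 1 t) atTop := by
  set ε : ℝ := c₂ * Real.exp (-(2 * (4:ℝ)^((M:ℝ)+2))) with hε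
  have hεpos : 0 < ε := mul_pos hc₂ (Real.exp_pos _)
  have hev : ∀ᶠ t in (atTop : Filter ℝ),
      ENNReal.ofReal ε ≤ ENNReal.ofReal (t^r) * Ealpha n g 1 t := by
    filter_upwards [eventually_ge_atTop (max ((4:ℝ)^(-(jk 0 : ℝ))) 1)] with t htt
    have ht1 : (1:ℝ) ≤ t := le_trans (le_max_right _ _) htt
    have ht : 0 < t := lt_of_lt_of_le one_pos ht1
    set L : ℝ := Real.logb 4 t with hL
    have htL : t = (4:ℝ)^L := (Real.rpow_logb four_pos (by norm_num) ht).symm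
    set a : ℤ := ⌈-L⌉ with ha
    have haL : -L ≤ a := Int.le_ceil _
    have haL2 : (a:ℝ) - 1 < -L := by
      have := Int.ceil_lt_add_one (-L)
      linarith
    have ha0 : a ≤ jk 0 := by
      have h1 : (4:ℝ)^(-(jk 0 : ℝ)) ≤ t := le_trans (le_max_left _ _) htt
      have h2 : (4:ℝ)^(-(jk 0 : ℝ)) ≤ (4:ℝ)^L := by rw [← htL]; exact h1
      have h3 : -((jk 0 : ℤ):ℝ) ≤ L :=
        (Real.rpow_le_rpow_left_iff (by norm_num : (1:ℝ) < 4)).mp h2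
      have : -L ≤ ((jk 0 : ℤ):ℝ) := by linarith
      exact Int.ceil_le.mpr this
    obtain ⟨k, hk1, hk2⟩ := window_hit jk hjk M hM a ha0
    set j : ℤ := jk k with hj
    have hcast1 : (a:ℝ) ≤ (j:ℝ) := by exact_mod_cast hk1
    have hcast2 : (j:ℝ) ≤ (a:ℝ) + M := by exact_mod_cast hk2
    -- t * 4^j ≥ 1
    have hu1 : (1:ℝ) ≤ t * (4:ℝ)^((j:ℝ)) := by
      rw [htL, ← Real.rpow_add four_pos, ← Real.rpow_zero 4]
      apply Real.rpow_le_rpow_of_exponent_le (by norm_num)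
      linarith
    -- t * 4^(j+1) ≤ 4^(M+2)
    have hu2 : t * (4:ℝ)^((j:ℝ)+1) ≤ (4:ℝ)^((M:ℝ)+2) := by
      rw [htL, ← Real.rpow_add four_pos]
      apply Real.rpow_le_rpow_of_exponent_le (by norm_num)
      linarith
    have hEl := E_lower g ht j
    calc ENNReal.ofReal ε ≤ ENNReal.ofReal (t^r *
        (Real.exp (-(2*t) * (4:ℝ)^((j:ℝ)+1)) * (c₂ * (4:ℝ)^(r*(j:ℝ))))) := by
          apply ENNReal.ofReal_le_ofReal
          have hq : t^r * (4:ℝ)^(r*(j:ℝ)) = (t * (4:ℝ)^((j:ℝ)))^r := by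
            rw [Real.mul_rpow ht.le (Real.rpow_pos_of_pos four_pos _).le, hlpA 4 four_pos]
            ring_nf
          have h1 : (1:ℝ) ≤ t^r * (4:ℝ)^(r*(j:ℝ)) := by
            rw [hq, ← Real.one_rpow r]
            exact Real.rpow_le_rpow (by norm_num) hu1 hr.le
          have h2 : Real.exp (-(2 * (4:ℝ)^((M:ℝ)+2))) ≤ Real.exp (-(2*t) * (4:ℝ)^((j:ℝ)+1)) := by
            apply Real.exp_le_exp.mpr
            have h3 : 0 < (4:ℝ)^((j:ℝ)+1) := Real.rpow_pos_of_pos four_pos _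
            nlinarith
          calc ε = c₂ * Real.exp (-(2 * (4:ℝ)^((M:ℝ)+2))) := hε
            _ ≤ c₂ * Real.exp (-(2*t) * (4:ℝ)^((j:ℝ)+1)) :=
              mul_le_mul_of_nonneg_left h2 hc₂.le
            _ = 1 * (Real.exp (-(2*t) * (4:ℝ)^((j:ℝ)+1)) * c₂) := by ring
            _ ≤ (t^r * (4:ℝ)^(r*(j:ℝ))) * (Real.exp (-(2*t) * (4:ℝ)^((j:ℝ)+1)) * c₂) := by
              apply mul_le_mul_of_nonneg_right h1
              positivity
            _ = t^r * (Real.exp (-(2*t) * (4:ℝ)^((j:ℝ)+1)) * (c₂ * (4:ℝ)^(r*(j:ℝ)))) := by ring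
      _ = ENNReal.ofReal (t^r) * (ENNReal.ofReal (Real.exp (-(2*t) * (4:ℝ)^((j:ℝ)+1))) *
          ENNReal.ofReal (c₂ * (4:ℝ)^(r*(j:ℝ)))) := by
          rw [← ENNReal.ofReal_mul (Real.exp_nonneg _), ← ENNReal.ofReal_mul (Real.rpow_nonneg ht.le r)]
      _ ≤ ENNReal.ofReal (t^r) * (ENNReal.ofReal (Real.exp (-(2*t) * (4:ℝ)^((j:ℝ)+1))) *
          bj n g j) := by
          gcongr
          exact hlow k
      _ ≤ ENNReal.ofReal (t^r) * Ealpha n g 1 t := by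
          gcongr
  have hle : ENNReal.ofReal ε ≤ liminf (fun t : ℝ => ENNReal.ofReal (t^r) * Ealpha n g 1 t) atTop :=
    le_liminf_of_le (by isBoundedDefault) hev
  exact lt_of_lt_of_le (ENNReal.ofReal_pos.mpr hεpos) hle

lemma rev_upper {r : ℝ} (hr : 0 < r) {K : ℝ}
    (hK : ∀ t : ℝ, 0 < t → ENNReal.ofReal (t^r) * Ealpha n g 1 t ≤ ENNReal.ofReal K) :
    ∀ j : ℤ, bj n g j ≤ ENNReal.ofReal ((max K 1 * Real.exp 8) * (4:ℝ)^(r*(j:ℝ))) := by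
  intro j
  set t : ℝ := (4:ℝ)^(-(j:ℝ)) with htdef
  have ht : 0 < t := Real.rpow_pos_of_pos four_pos _
  have hexp8 : -(2*t) * (4:ℝ)^((j:ℝ)+1) = -8 := by
    rw [htdef]
    rw [show -(2*((4:ℝ)^(-(j:ℝ)))) * (4:ℝ)^((j:ℝ)+1) =
      -(2 * ((4:ℝ)^(-(j:ℝ)) * (4:ℝ)^((j:ℝ)+1))) by ring, ← Real.rpow_add four_pos]
    rw [show -(j:ℝ) + ((j:ℝ)+1) = 1 by ring, Real.rpow_one]
    norm_num
  have hEl := E_lower g ht j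
  rw [hexp8] at hEl
  have h1 : ENNReal.ofReal (t^r * Real.exp (-8)) * bj n g j ≤ ENNReal.ofReal (max K 1) := by
    calc ENNReal.ofReal (t^r * Real.exp (-8)) * bj n g j
        = ENNReal.ofReal (t^r) * (ENNReal.ofReal (Real.exp (-8)) * bj n g j) := by
          rw [ENNReal.ofReal_mul (Real.rpow_nonneg ht.le r), mul_assoc]
      _ ≤ ENNReal.ofReal (t^r) * Ealpha n g 1 t := by gcongr
      _ ≤ ENNReal.ofReal K := hK t ht
      _ ≤ ENNReal.ofReal (max K 1) := ENNReal.ofReal_le_ofReal (le_max_left _ _)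
  have hpos : 0 < t^r * Real.exp (-8) := mul_pos (Real.rpow_pos_of_pos ht r) (Real.exp_pos _)
  have h2 : bj n g j ≤ ENNReal.ofReal (max K 1) / ENNReal.ofReal (t^r * Real.exp (-8)) := by
    rw [ENNReal.le_div_iff_mul_le (Or.inl (by simp [ENNReal.ofReal_pos.mpr hpos, ne_of_gt]))
      (Or.inl ENNReal.ofReal_ne_top)]
    rw [mul_comm]
    exact h1
  refine h2.trans ?_
  rw [← ENNReal.ofReal_div_of_pos hpos]
  apply ENNReal.ofReal_le_ofReal
  have htr : t^r = ((4:ℝ)^(r*(j:ℝ)))⁻¹ := by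
    rw [htdef, hlpA 4 four_pos, ← Real.rpow_neg (by norm_num)]
    congr 1
    ring
  rw [htr, Real.exp_neg]
  rw [div_eq_mul_inv, mul_inv, inv_inv, inv_inv]
  have h4 : (0:ℝ) < (4:ℝ)^(r*(j:ℝ)) := Real.rpow_pos_of_pos four_pos _
  have h5 : (0:ℝ) ≤ max K 1 := le_trans zero_le_one (le_max_right _ _)
  calc max K 1 * ((4:ℝ)^(r*(j:ℝ)) * Real.exp 8) = max K 1 * Real.exp 8 * (4:ℝ)^(r*(j:ℝ)) := by ring
    _ ≤ max K 1 * Real.exp 8 * (4:ℝ)^(r*(j:ℝ)) := le_refl _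

/-- step1 factored out -/
lemma step1_bd {r : ℝ} (hr : 0 < r) {C₂ : ℝ} (hC₂ : 0 ≤ C₂)
    (hbj : bj n g j ≤ ENNReal.ofReal (C₂ * (4:ℝ)^(r*(j:ℝ)))) {t : ℝ} (ht : 0 < t) :
    ENNReal.ofReal (t^r) * (ENNReal.ofReal (Real.exp (-(2*t) * (4:ℝ)^((j:ℝ)))) * bj n g j) ≤
    ENNReal.ofReal (C₂ * ((t * (4:ℝ)^((j:ℝ)))^r *
      Real.exp (-(2*(t * (4:ℝ)^((j:ℝ))))))) := by
  calc ENNReal.ofReal (t^r) * (ENNReal.ofReal (Real.exp (-(2*t) * (4:ℝ)^((j:ℝ)))) * bj n g j)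
      ≤ ENNReal.ofReal (t^r) * (ENNReal.ofReal (Real.exp (-(2*t) * (4:ℝ)^((j:ℝ)))) *
        ENNReal.ofReal (C₂ * (4:ℝ)^(r*(j:ℝ)))) := by gcongr
    _ = ENNReal.ofReal (t^r * (Real.exp (-(2*t) * (4:ℝ)^((j:ℝ))) * (C₂ * (4:ℝ)^(r*(j:ℝ))))) := by
        rw [← ENNReal.ofReal_mul (Real.exp_nonneg _), ← ENNReal.ofReal_mul (Real.rpow_nonneg ht.le r)]
    _ = ENNReal.ofReal (C₂ * ((t * (4:ℝ)^((j:ℝ)))^r * Real.exp (-(2*(t * (4:ℝ)^((j:ℝ))))))) := by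
        congr 1
        have h1 : (4:ℝ) ^ (r * (j:ℝ)) = ((4:ℝ)^((j:ℝ)))^r := by
          rw [hlpA 4 four_pos]; congr 1; ring
        have h2 : (t * (4:ℝ)^((j:ℝ)))^r = t^r * ((4:ℝ)^((j:ℝ)))^r :=
          Real.mul_rpow ht.le (Real.rpow_pos_of_pos four_pos _).le
        have h3 : -(2*t) * (4:ℝ)^((j:ℝ)) = -(2*(t * (4:ℝ)^((j:ℝ)))) := by ring
        rw [h1, h2, h3]
        ring

set_option maxHeartbeats 2000000 in
lemma rev_window (hn : 1 ≤ n) {r : ℝ} (hr : 0 < r) {C₂ : ℝ} (hC₂ : 0 ≤ C₂)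
    (hb : ∀ j : ℤ, bj n g j ≤ ENNReal.ofReal (C₂ * (4:ℝ)^(r*(j:ℝ))))
    {ε T : ℝ} (hεp : 0 < ε)
    (hev : ∀ t : ℝ, T ≤ t → ENNReal.ofReal ε ≤ ENNReal.ofReal (t^r) * Ealpha n g 1 t) :
    ∃ (L m : ℕ) (c₂ : ℝ), 0 < c₂ ∧ ∀ j₀ : ℤ, (j₀:ℝ) ≤ - Real.logb 4 (max T 1) →
      ∃ j : ℤ, j₀ - (L:ℤ) ≤ j ∧ j ≤ j₀ + (m:ℤ) ∧
        ENNReal.ofReal (c₂ * (4:ℝ)^(r*(j:ℝ))) ≤ bj n g j := by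
  classical
  obtain ⟨CR, hCR1, hCR⟩ := rpow_le_exp_aux r hr.le
  have hCR0 : 0 < CR := lt_of_lt_of_le one_pos hCR1
  set y : ℝ := (4:ℝ)^(-r) with hy
  have hy0 : 0 < y := Real.rpow_pos_of_pos four_pos _
  have hy1 : y < 1 := Real.rpow_lt_one_of_one_lt_of_neg (by norm_num) (by linarith)
  have he1 : Real.exp (-1) < 1 := Real.exp_lt_one_iff.mpr (by norm_num)
  set De : ℝ≥0∞ := (1 - ENNReal.ofReal (Real.exp (-1)))⁻¹ with hDe
  have hDetop : De ≠ ⊤ := (inv_one_sub_ofReal_lt_top he1).ne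
  set de : ℝ := De.toReal with hde
  have hde0 : 0 ≤ de := ENNReal.toReal_nonneg
  set Dy : ℝ≥0∞ := (1 - ENNReal.ofReal y)⁻¹ with hDy
  have hDytop : Dy ≠ ⊤ := (inv_one_sub_ofReal_lt_top hy1).ne
  set dy : ℝ := Dy.toReal with hdy
  have hdy0 : 0 ≤ dy := ENNReal.toReal_nonneg
  -- choose m
  have hXm : (0:ℝ) < 4*(C₂*CR*(de+1)+1) := by positivity
  obtain ⟨m, hm⟩ := exists_pow_lt_of_lt_one (show (0:ℝ) < ε / (4*(C₂*CR*(de+1)+1)) by positivity) he1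
  have hmb : C₂ * CR * Real.exp (-((m:ℝ)+1)) * de ≤ ε / 4 := by
    have h1 : Real.exp (-((m:ℝ)+1)) ≤ Real.exp (-1) ^ m := by
      rw [show -((m:ℝ)+1) = -1 + (m:ℝ)*(-1) by ring, Real.exp_add, Real.exp_nat_mul]
      have h2 : Real.exp (-1) ^ m ≤ 1 * Real.exp (-1) ^ m := by rw [one_mul]
      calc Real.exp (-1) * Real.exp (-1) ^ m ≤ 1 * Real.exp (-1) ^ m :=
          mul_le_mul_of_nonneg_right he1.le (by positivity)
        _ = Real.exp (-1) ^ m := one_mul _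
    have hP : (0:ℝ) ≤ C₂*CR*de := by positivity
    have h5 : C₂ * CR * Real.exp (-((m:ℝ)+1)) * de ≤ (C₂*CR*de) * (Real.exp (-1))^m := by
      have := mul_le_mul_of_nonneg_left h1 hP
      nlinarith
    have h6 : (C₂*CR*de) * (Real.exp (-1))^m ≤ (C₂*CR*de) * (ε / (4*(C₂*CR*(de+1)+1))) :=
      mul_le_mul_of_nonneg_left hm.le hP
    have h7 : (C₂*CR*de) * (ε / (4*(C₂*CR*(de+1)+1))) ≤ ε/4 := by
      rw [mul_div_assoc']
      rw [div_le_div_iff₀ hXm (by norm_num)]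
      nlinarith [mul_nonneg (mul_nonneg hC₂ hCR0.le) hεp.le]
    linarith
  -- choose L
  have hXL : (0:ℝ) < 4*(C₂*(dy+1)+1) := by positivity
  obtain ⟨L, hL⟩ := exists_pow_lt_of_lt_one (show (0:ℝ) < ε / (4*(C₂*(dy+1)+1)) by positivity) hy1
  have hLb : C₂ * y^(L+1) * dy ≤ ε / 4 := by
    have h1 : y^(L+1) ≤ y^L := by
      rw [pow_succ]
      calc y^L * y ≤ y^L * 1 := mul_le_mul_of_nonneg_left hy1.le (by positivity)
        _ = y^L := mul_one _
    have hP : (0:ℝ) ≤ C₂*dy := by positivity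
    have h5 : C₂ * y^(L+1) * dy ≤ (C₂*dy) * y^L := by
      have := mul_le_mul_of_nonneg_left h1 hP
      nlinarith
    have h6 : (C₂*dy) * y^L ≤ (C₂*dy) * (ε / (4*(C₂*(dy+1)+1))) :=
      mul_le_mul_of_nonneg_left hL.le hP
    have h7 : (C₂*dy) * (ε / (4*(C₂*(dy+1)+1))) ≤ ε/4 := by
      rw [mul_div_assoc']
      rw [div_le_div_iff₀ hXL (by norm_num)]
      nlinarith [mul_nonneg hC₂ hεp.le]
    linarith
  -- choose c₂
  set G : ℝ := ((L:ℝ)+(m:ℝ)+1) * (4:ℝ)^(r*(m:ℝ)) with hG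
  have hGpos : 0 < G := by positivity
  set c₂ : ℝ := ε / (4*(G+1)) with hc₂def
  have hc₂ : 0 < c₂ := by positivity
  have hc₂b : ((L:ℝ)+(m:ℝ)+1) * (c₂ * (4:ℝ)^(r*(m:ℝ))) ≤ ε / 4 := by
    have h3 := div_mul_cancel₀ ε (show (4*(G+1)) ≠ 0 by positivity)
    have h4 : ((L:ℝ)+(m:ℝ)+1) * (c₂ * (4:ℝ)^(r*(m:ℝ))) = c₂ * G := by rw [hG]; ring
    nlinarith
  refine ⟨L, m, c₂, hc₂, fun j₀ hj₀ => ?_⟩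
  by_contra hcon
  push_neg at hcon
  set t : ℝ := (4:ℝ)^(-(j₀:ℝ)) with htdef
  have ht : 0 < t := Real.rpow_pos_of_pos four_pos _
  have hmax : (0:ℝ) < max T 1 := lt_of_lt_of_le one_pos (le_max_right _ _)
  have hTt : T ≤ t := by
    have h1 : Real.logb 4 (max T 1) ≤ -(j₀:ℝ) := by linarith
    have h2 : (4:ℝ)^(Real.logb 4 (max T 1)) ≤ t :=
      Real.rpow_le_rpow_of_exponent_le (by norm_num) h1
    rw [Real.rpow_logb four_pos (by norm_num) hmax] at h2
    exact le_trans (le_max_left _ _) h2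
  have hE := hev t hTt
  have hu : ∀ j : ℤ, t * (4:ℝ)^((j:ℝ)) = (4:ℝ)^((j:ℝ)-(j₀:ℝ)) := by
    intro j
    rw [htdef, ← Real.rpow_add four_pos]
    congr 1
    ring
  set flo : ℤ → ℝ≥0∞ := fun j => if j < j₀ - (L:ℤ) then
    ENNReal.ofReal ((C₂ * y^(L+1)) * y ^ (j₀ - (L:ℤ) - 1 - j).toNat) else 0 with hflo
  set fmid : ℤ → ℝ≥0∞ := fun j => if j₀ - (L:ℤ) ≤ j ∧ j ≤ j₀ + (m:ℤ) then
    ENNReal.ofReal (c₂ * (4:ℝ)^(r*(m:ℝ))) else 0 with hfmid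
  set fhi : ℤ → ℝ≥0∞ := fun j => if j₀ + (m:ℤ) < j then
    ENNReal.ofReal ((C₂ * CR * Real.exp (-((m:ℝ)+1))) * Real.exp (-1) ^ (j - (j₀ + (m:ℤ)) - 1).toNat)
    else 0 with hfhi
  have hpt : ∀ j : ℤ, ENNReal.ofReal (t^r) *
      (ENNReal.ofReal (Real.exp (-(2*t) * (4:ℝ)^((j:ℝ)))) * bj n g j) ≤
      flo j + fmid j + fhi j := by
    intro j
    by_cases h1 : j < j₀ - (L:ℤ)
    · -- low case
      set k : ℕ := (j₀ - (L:ℤ) - 1 - j).toNat with hkdef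
      have hk : (j₀:ℝ) - (j:ℝ) = ((L:ℝ) + 1 + (k:ℝ)) := by
        have h2 : j₀ - j = (L:ℤ) + 1 + (k:ℤ) := by omega
        have := congrArg (fun z : ℤ => (z:ℝ)) h2
        push_cast at this
        linarith
      refine le_trans (step1_bd g hr hC₂ (hb j) ht) ?_
      have hupos : 0 < t * (4:ℝ)^((j:ℝ)) := mul_pos ht (Real.rpow_pos_of_pos four_pos _)
      have hur : (t * (4:ℝ)^((j:ℝ)))^r = y ^ (L+1+k) := by
        rw [hu j, hlpA 4 four_pos, hy, inv_pow_rpow r (L+1+k)]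
        congr 1
        have h9 : (j:ℝ) - (j₀:ℝ) = -((L:ℝ)+1+(k:ℝ)) := by linarith
        rw [show ((j:ℝ)-(j₀:ℝ)) * r = ((j:ℝ)-(j₀:ℝ)) * r from rfl]
        rw [h9]
        push_cast
        ring
      have hexp1 : Real.exp (-(2*(t * (4:ℝ)^((j:ℝ))))) ≤ 1 :=
        Real.exp_le_one_iff.mpr (by nlinarith)
      have hreal : C₂ * ((t * (4:ℝ)^((j:ℝ)))^r * Real.exp (-(2*(t * (4:ℝ)^((j:ℝ)))))) ≤
          (C₂ * y^(L+1)) * y ^ k := by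
        rw [hur]
        have h3 : y^(L+1+k) * Real.exp (-(2*(t * (4:ℝ)^((j:ℝ))))) ≤ y^(L+1+k) :=
          mul_le_of_le_one_right (by positivity) hexp1
        calc C₂ * (y^(L+1+k) * Real.exp (-(2*(t * (4:ℝ)^((j:ℝ)))))) ≤ C₂ * y^(L+1+k) :=
            mul_le_mul_of_nonneg_left h3 hC₂
          _ = (C₂ * y^(L+1)) * y^k := by rw [pow_add]; ring
      calc ENNReal.ofReal (C₂ * ((t * (4:ℝ)^((j:ℝ)))^r * Real.exp (-(2*(t * (4:ℝ)^((j:ℝ)))))))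
          ≤ ENNReal.ofReal ((C₂ * y^(L+1)) * y ^ k) := ENNReal.ofReal_le_ofReal hreal
        _ = flo j := by rw [hflo]; simp only [h1, if_true]; rfl
        _ ≤ flo j + fmid j + fhi j := by
            calc flo j ≤ flo j + fmid j := le_self_add
              _ ≤ flo j + fmid j + fhi j := le_self_add
    · by_cases h2 : j ≤ j₀ + (m:ℤ)
      · -- middle case
        have hmem : j₀ - (L:ℤ) ≤ j ∧ j ≤ j₀ + (m:ℤ) := ⟨by omega, h2⟩
        have hble := (hcon j hmem.1 hmem.2).le
        have hexp1 : ENNReal.ofReal (Real.exp (-(2*t) * (4:ℝ)^((j:ℝ)))) ≤ 1 := by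
          rw [← ENNReal.ofReal_one]
          apply ENNReal.ofReal_le_ofReal
          apply Real.exp_le_one_iff.mpr
          nlinarith [Real.rpow_pos_of_pos four_pos ((j:ℝ))]
        calc ENNReal.ofReal (t^r) * (ENNReal.ofReal (Real.exp (-(2*t) * (4:ℝ)^((j:ℝ)))) * bj n g j)
            ≤ ENNReal.ofReal (t^r) * (1 * ENNReal.ofReal (c₂ * (4:ℝ)^(r*(j:ℝ)))) := by
              gcongr
          _ = ENNReal.ofReal (t^r * (c₂ * (4:ℝ)^(r*(j:ℝ)))) := by
              rw [one_mul, ← ENNReal.ofReal_mul (Real.rpow_nonneg ht.le r)]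
          _ ≤ ENNReal.ofReal (c₂ * (4:ℝ)^(r*(m:ℝ))) := by
              apply ENNReal.ofReal_le_ofReal
              have h3 : t^r * (4:ℝ)^(r*(j:ℝ)) = (4:ℝ)^(r*((j:ℝ)-(j₀:ℝ))) := by
                rw [htdef, hlpA 4 four_pos, ← Real.rpow_add four_pos]
                congr 1
                ring
              have h4 : (4:ℝ)^(r*((j:ℝ)-(j₀:ℝ))) ≤ (4:ℝ)^(r*(m:ℝ)) := by
                apply Real.rpow_le_rpow_of_exponent_le (by norm_num)
                have : (j:ℝ) - (j₀:ℝ) ≤ (m:ℝ) := by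
                  have : (j:ℝ) ≤ (j₀:ℝ) + (m:ℝ) := by exact_mod_cast h2
                  linarith
                nlinarith
              calc t^r * (c₂ * (4:ℝ)^(r*(j:ℝ))) = c₂ * (t^r * (4:ℝ)^(r*(j:ℝ))) := by ring
                _ = c₂ * (4:ℝ)^(r*((j:ℝ)-(j₀:ℝ))) := by rw [h3]
                _ ≤ c₂ * (4:ℝ)^(r*(m:ℝ)) := mul_le_mul_of_nonneg_left h4 hc₂.le
          _ = fmid j := by rw [hfmid]; simp only [hmem, and_self, if_true]
          _ ≤ flo j + fmid j + fhi j := by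
              calc fmid j ≤ flo j + fmid j := le_add_self
                _ ≤ flo j + fmid j + fhi j := le_self_add
      · -- high case
        have h3 : j₀ + (m:ℤ) < j := by omega
        set k : ℕ := (j - (j₀ + (m:ℤ)) - 1).toNat with hkdef
        have hk : (j:ℝ) - (j₀:ℝ) = (m:ℝ) + 1 + (k:ℝ) := by
          have h4 : j - j₀ = (m:ℤ) + 1 + (k:ℤ) := by omega
          have := congrArg (fun z : ℤ => (z:ℝ)) h4
          push_cast at this
          linarith
        refine le_trans (step1_bd g hr hC₂ (hb j) ht) ?_
        set u : ℝ := t * (4:ℝ)^((j:ℝ)) with hudef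
        have hupos : 0 < u := mul_pos ht (Real.rpow_pos_of_pos four_pos _)
        have hunat : u = (4:ℝ)^(m+1+k : ℕ) := by
          rw [hudef, hu j, hk, ← Real.rpow_natCast 4 (m+1+k)]
          congr 1
          push_cast
          ring
        have hular : ((m:ℝ)+1+(k:ℝ)) ≤ u := by
          rw [hunat]
          have := nat_le_four_pow (m+1+k)
          push_cast at this
          linarith
        have hC : u ^ r * Real.exp (-(2*u)) ≤ CR * Real.exp (-u) := by
          have h5 := hCR u hupos.le
          calc u ^ r * Real.exp (-(2*u)) ≤ (CR * Real.exp u) * Real.exp (-(2*u)) :=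
              mul_le_mul_of_nonneg_right h5 (Real.exp_nonneg _)
            _ = CR * Real.exp (-u) := by rw [mul_assoc, ← Real.exp_add]; ring_nf
        have hD : Real.exp (-u) ≤ Real.exp (-((m:ℝ)+1+(k:ℝ))) := Real.exp_le_exp.mpr (by linarith)
        have hEe : Real.exp (-((m:ℝ)+1+(k:ℝ))) = Real.exp (-((m:ℝ)+1)) * Real.exp (-1) ^ k := by
          rw [← Real.exp_nat_mul, ← Real.exp_add]
          congr 1
          ring
        have hreal : C₂ * (u ^ r * Real.exp (-(2*u))) ≤
            (C₂ * CR * Real.exp (-((m:ℝ)+1))) * Real.exp (-1) ^ k := by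
          calc C₂ * (u ^ r * Real.exp (-(2*u))) ≤ C₂ * (CR * Real.exp (-u)) :=
              mul_le_mul_of_nonneg_left hC hC₂
            _ ≤ C₂ * (CR * Real.exp (-((m:ℝ)+1+(k:ℝ)))) := by
                apply mul_le_mul_of_nonneg_left _ hC₂
                exact mul_le_mul_of_nonneg_left hD hCR0.le
            _ = (C₂ * CR * Real.exp (-((m:ℝ)+1))) * Real.exp (-1) ^ k := by rw [hEe]; ring
        calc ENNReal.ofReal (C₂ * (u ^ r * Real.exp (-(2*u))))
            ≤ ENNReal.ofReal ((C₂ * CR * Real.exp (-((m:ℝ)+1))) * Real.exp (-1) ^ k) :=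
              ENNReal.ofReal_le_ofReal hreal
          _ = fhi j := by rw [hfhi]; simp only [h3, if_true]; rfl
          _ ≤ flo j + fmid j + fhi j := le_add_self
  -- sum the three pieces
  have hsum : ENNReal.ofReal ε ≤ (∑' j : ℤ, flo j) + (∑' j : ℤ, fmid j) + (∑' j : ℤ, fhi j) := by
    calc ENNReal.ofReal ε ≤ ENNReal.ofReal (t^r) * Ealpha n g 1 t := hE
      _ ≤ ENNReal.ofReal (t^r) *
          ∑' j : ℤ, ENNReal.ofReal (Real.exp (-(2*t) * (4:ℝ)^((j:ℝ)))) * bj n g j := by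
          gcongr
          exact E_upper g hn ht
      _ = ∑' j : ℤ, ENNReal.ofReal (t^r) *
          (ENNReal.ofReal (Real.exp (-(2*t) * (4:ℝ)^((j:ℝ)))) * bj n g j) :=
          ENNReal.tsum_mul_left.symm
      _ ≤ ∑' j : ℤ, (flo j + fmid j + fhi j) := ENNReal.tsum_le_tsum hpt
      _ = (∑' j : ℤ, (flo j + fmid j)) + (∑' j : ℤ, fhi j) := ENNReal.tsum_add
      _ = (∑' j : ℤ, flo j) + (∑' j : ℤ, fmid j) + (∑' j : ℤ, fhi j) := by
          rw [ENNReal.tsum_add]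
  have hlo : (∑' j : ℤ, flo j) ≤ ENNReal.ofReal (ε/4) := by
    have h1 : (∑' j : ℤ, flo j) ≤ ENNReal.ofReal (C₂ * y^(L+1)) * Dy := by
      apply tsum_tail_low (j₀ - (L:ℤ)) (C₂ * y^(L+1)) y (by positivity) hy0.le flo
      · intro j hj
        rw [hflo]
        simp only [hj, if_true]
        exact le_refl _
      · intro j hj
        rw [hflo]
        simp only [show ¬ (j < j₀ - (L:ℤ)) by omega, if_false]
    calc (∑' j : ℤ, flo j) ≤ ENNReal.ofReal (C₂ * y^(L+1)) * Dy := h1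
      _ = ENNReal.ofReal (C₂ * y^(L+1)) * ENNReal.ofReal dy := by
          rw [hdy, ENNReal.ofReal_toReal hDytop]
      _ = ENNReal.ofReal (C₂ * y^(L+1) * dy) := by
          rw [← ENNReal.ofReal_mul (by positivity)]
      _ ≤ ENNReal.ofReal (ε/4) := ENNReal.ofReal_le_ofReal hLb
  have hmid : (∑' j : ℤ, fmid j) ≤ ENNReal.ofReal (ε/4) := by
    have h1 : (∑' j : ℤ, fmid j) ≤
        (((j₀ + (m:ℤ)) + 1 - (j₀ - (L:ℤ))).toNat : ℝ≥0∞) * ENNReal.ofReal (c₂ * (4:ℝ)^(r*(m:ℝ))) := by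
      apply tsum_mid (j₀ - (L:ℤ)) (j₀ + (m:ℤ)) _ fmid
      · intro j hj
        simp only [hfmid]
        rw [if_neg (by omega)]
      · intro j
        simp only [hfmid]
        split
        · exact le_refl _
        · exact zero_le
    have hcount : ((j₀ + (m:ℤ)) + 1 - (j₀ - (L:ℤ))).toNat = L + m + 1 := by omega
    calc (∑' j : ℤ, fmid j) ≤
        (((j₀ + (m:ℤ)) + 1 - (j₀ - (L:ℤ))).toNat : ℝ≥0∞) * ENNReal.ofReal (c₂ * (4:ℝ)^(r*(m:ℝ))) := h1
      _ = ENNReal.ofReal ((L+m+1 : ℕ) : ℝ) * ENNReal.ofReal (c₂ * (4:ℝ)^(r*(m:ℝ))) := by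
          rw [hcount, ENNReal.ofReal_natCast]
      _ = ENNReal.ofReal (((L+m+1 : ℕ) : ℝ) * (c₂ * (4:ℝ)^(r*(m:ℝ)))) := by
          rw [← ENNReal.ofReal_mul (by positivity)]
      _ ≤ ENNReal.ofReal (ε/4) := by
          apply ENNReal.ofReal_le_ofReal
          have : (((L+m+1 : ℕ)) : ℝ) = (L:ℝ)+(m:ℝ)+1 := by push_cast; ring
          rw [this]
          exact hc₂b
  have hhi : (∑' j : ℤ, fhi j) ≤ ENNReal.ofReal (ε/4) := by
    have h1 : (∑' j : ℤ, fhi j) ≤ ENNReal.ofReal (C₂ * CR * Real.exp (-((m:ℝ)+1))) * De := by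
      apply tsum_tail_high (j₀ + (m:ℤ)) (C₂ * CR * Real.exp (-((m:ℝ)+1))) (Real.exp (-1))
        (by positivity) (Real.exp_nonneg _) fhi
      · intro j hj
        rw [hfhi]
        simp only [hj, if_true]
        exact le_refl _
      · intro j hj
        rw [hfhi]
        simp only [show ¬ (j₀ + (m:ℤ) < j) by omega, if_false]
    calc (∑' j : ℤ, fhi j) ≤ ENNReal.ofReal (C₂ * CR * Real.exp (-((m:ℝ)+1))) * De := h1
      _ = ENNReal.ofReal (C₂ * CR * Real.exp (-((m:ℝ)+1))) * ENNReal.ofReal de := by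
          rw [hde, ENNReal.ofReal_toReal hDetop]
      _ = ENNReal.ofReal (C₂ * CR * Real.exp (-((m:ℝ)+1)) * de) := by
          rw [← ENNReal.ofReal_mul (by positivity)]
      _ ≤ ENNReal.ofReal (ε/4) := ENNReal.ofReal_le_ofReal hmb
  have hfinal : ENNReal.ofReal ε ≤ ENNReal.ofReal (3*(ε/4)) := by
    calc ENNReal.ofReal ε ≤ (∑' j : ℤ, flo j) + (∑' j : ℤ, fmid j) + (∑' j : ℤ, fhi j) := hsum
      _ ≤ ENNReal.ofReal (ε/4) + ENNReal.ofReal (ε/4) + ENNReal.ofReal (ε/4) := by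
          gcongr
      _ = ENNReal.ofReal (3*(ε/4)) := by
          rw [← ENNReal.ofReal_add (by positivity) (by positivity),
            ← ENNReal.ofReal_add (by positivity) (by positivity)]
          congr 1
          ring
  have : ε ≤ 3*(ε/4) := (ENNReal.ofReal_le_ofReal_iff (by positivity)).mp hfinal
  linarith

lemma build_seq {r : ℝ} (L m : ℕ) (c₂ : ℝ) (B : ℝ)
    (hP : ∀ j₀ : ℤ, (j₀:ℝ) ≤ B → ∃ j : ℤ, j₀ - (L:ℤ) ≤ j ∧ j ≤ j₀ + (m:ℤ) ∧
      ENNReal.ofReal (c₂ * (4:ℝ)^(r*(j:ℝ))) ≤ bj n g j) :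
    ∃ jk : ℕ → ℤ, Tendsto jk atTop atBot ∧ (∀ k, |jk k - jk (k+1)| ≤ ((2*(L+m)+1 : ℕ) : ℤ)) ∧
      ∀ k, ENNReal.ofReal (c₂ * (4:ℝ)^(r*((jk k : ℤ):ℝ))) ≤ bj n g (jk k) := by
  classical
  set J₀ : ℤ := ⌊B⌋ with hJ₀
  set step : ℤ := (L:ℤ) + (m:ℤ) + 1 with hstep
  have hstep1 : 1 ≤ step := by omega
  have hval : ∀ k : ℕ, ((J₀ - (k:ℤ)*step : ℤ):ℝ) ≤ B := by
    intro k
    have h1 : (J₀:ℝ) ≤ B := Int.floor_le B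
    have h2 : (0:ℤ) ≤ (k:ℤ)*step := mul_nonneg (by positivity) (by omega)
    have h3 : ((J₀ - (k:ℤ)*step : ℤ):ℝ) ≤ (J₀:ℝ) := by
      push_cast
      have : (0:ℝ) ≤ ((k:ℤ)*step : ℤ) := by exact_mod_cast h2
      push_cast at this
      linarith
    linarith
  choose F h1 h2 h3 using fun k : ℕ => hP (J₀ - (k:ℤ)*step) (hval k)
  refine ⟨F, ?_, ?_, h3⟩
  · rw [tendsto_atTop_atBot]
    intro b
    refine ⟨(J₀ + (m:ℤ) - b).toNat, fun k hk => ?_⟩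
    have hk' : ((J₀ + (m:ℤ) - b).toNat : ℤ) ≤ (k:ℤ) := by exact_mod_cast hk
    have hks : (k:ℤ) ≤ (k:ℤ)*step := le_mul_of_one_le_right (by positivity) hstep1
    have := h2 k
    omega
  · intro k
    have ha := h1 k
    have hb := h2 k
    have hc := h1 (k+1)
    have hd := h2 (k+1)
    have he : ((k+1 : ℕ):ℤ)*step = (k:ℤ)*step + step := by push_cast; ring
    rw [abs_le]
    constructor <;> omega

lemma upper_conv {s C : ℝ} (hC : 0 < C) (j : ℤ) :
    ajBlock n g j ≤ ENNReal.ofReal (C * (2:ℝ)^(s * (j:ℝ))) ↔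
    bj n g j ≤ ENNReal.ofReal ((C^2) * (4:ℝ)^(s*(j:ℝ))) := by
  rw [ajBlock_eq, half_le_iff, ofReal_sq _ (by positivity)]
  rw [mul_pow, ← four_rpow]

lemma lower_conv {s c : ℝ} (hc : 0 < c) (j : ℤ) :
    ENNReal.ofReal (c * (2:ℝ)^(s * (j:ℝ))) ≤ ajBlock n g j ↔
    ENNReal.ofReal ((c^2) * (4:ℝ)^(s*(j:ℝ))) ≤ bj n g j := by
  rw [ajBlock_eq, le_half_iff, ofReal_sq _ (by positivity)]
  rw [mul_pow, ← four_rpow]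

end S7

theorem stmt7 (n : ℕ) (hn : 1 ≤ n) (σ : ℝ) (hσ : 0 < σ)
    (g : EuclideanSpace ℝ (Fin n) → ℂ) (hg_meas : Measurable g) :
    WeakACond n g (2 * σ) ↔
    ((∃ K : ℝ, ∀ t : ℝ, 0 < t →
        ENNReal.ofReal (t ^ (2 * σ)) * Ealpha n g 1 t ≤ ENNReal.ofReal K) ∧
      0 < liminf (fun t : ℝ => ENNReal.ofReal (t ^ (2 * σ)) * Ealpha n g 1 t) atTop) := by
  have hr : 0 < 2*σ := by linarith
  constructor
  · rintro ⟨c, C, hc, hC, jk, htend, ⟨M, hM⟩, hupper, hlower⟩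
    have hbu : ∀ j : ℤ, S7.bj n g j ≤ ENNReal.ofReal ((C^2) * (4:ℝ)^((2*σ)*(j:ℝ))) :=
      fun j => (S7.upper_conv g hC j).mp (hupper j)
    constructor
    · exact S7.sup_bound g hn hr (by positivity) hbu
    · apply S7.liminf_lower g hn hr (show 0 < c^2 by positivity) jk htend M hM
      intro k
      exact (S7.lower_conv g hc (jk k)).mp (hlower k)
  · rintro ⟨⟨K, hK⟩, hpos⟩
    have hbu := S7.rev_upper g hr hK
    set C : ℝ := Real.sqrt (max K 1 * Real.exp 8) with hCdef
    have hCpos : 0 < C := Real.sqrt_pos.mpr (by positivity)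
    have hCsq : C^2 = max K 1 * Real.exp 8 := Real.sq_sqrt (by positivity)
    obtain ⟨ε, hε0, hε1, hε2⟩ := ENNReal.lt_iff_exists_real_btwn.mp hpos
    have hεpos : 0 < ε := ENNReal.ofReal_pos.mp hε1
    have hev' : ∀ᶠ t in (atTop : Filter ℝ), ENNReal.ofReal ε <
        ENNReal.ofReal (t ^ (2*σ)) * Ealpha n g 1 t :=
      eventually_lt_of_lt_liminf hε2
    obtain ⟨T, hT⟩ := eventually_atTop.mp hev'
    obtain ⟨L, m, c₂, hc₂, hP⟩ := S7.rev_window g hn hr (show (0:ℝ) ≤ C^2 by positivity)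
      (by rw [hCsq]; exact hbu) hεpos (fun t ht => (hT t ht).le)
    obtain ⟨jk, htend, hgap, hlow⟩ := S7.build_seq g L m c₂ (- Real.logb 4 (max T 1)) hP
    refine ⟨Real.sqrt c₂, C, Real.sqrt_pos.mpr hc₂, hCpos, jk, htend, ⟨2*(L+m)+1, ?_⟩, ?_, ?_⟩
    · intro k
      exact_mod_cast hgap k
    · intro j
      apply (S7.upper_conv g hCpos j).mpr
      rw [hCsq]
      exact hbu j
    · intro k
      apply (S7.lower_conv g (Real.sqrt_pos.mpr hc₂) (jk k)).mpr
      rw [Real.sq_sqrt hc₂.le]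
      exact hlow k
end
end
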